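/- arXiv:1312.7653 — 8 statements merged into one kernel-verified Lean document; each statement's English description precedes it below -/
import Mathlib

section
/- Let X be a nonempty finite set and let A = (α_{xy})_{x,y∈X} be the infinitesimal matrix of a connected continuous-time Markov chain on X: α_{xy} ≥ 0 for x ≠ y, α_{xx} = −∑_{y≠x} α_{xy}, and for any x,y ∈ X there is a finite sequence x = c_0, c_1, …, c_m = y with α_{c_j c_{j+1}} > 0 for each j. Let q be a stationary probability distribution of A (∑_x q(x)·α_{xy} = 0 for all y) with q(x) > 0 for all x. Let p : ℝ → (X → ℝ) be a differentiable family of probability measures solving the Kolmogorov forward equation ṗ_y(t) = ∑_x p_x(t)·α_{xy}. Then at every time t at which p(t) ≠ q and p(t) is strictly positive, the derivative d/dt D(p(t)|q) is strictly negative; in particular D(p(t)|q) is strictly decreasing as long as p(t) ≠ q. -/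
/-- For a connected continuous-time Markov chain with infinitesimal matrix `α`
and strictly positive stationary distribution `q`, along any differentiable solution `p` of
the Kolmogorov forward equation, the relative entropy `D(p(t)|q)` has strictly negative
derivative at every time `t` at which `p t ≠ q` and `p t` is strictly positive. -/
theorem entropy_strict_decrease_mutation
    {X : Type*} [Fintype X] [Nonempty X] [DecidableEq X]
    (α : X → X → ℝ)
    (hα_off : ∀ x y, x ≠ y → 0 ≤ α x y)
    (hα_diag : ∀ x, α x x = -∑ y ∈ Finset.univ.erase x, α x y)
    (hα_conn : ∀ x y, Relation.ReflTransGen (fun u v => 0 < α u v) x y)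
    (q : X → ℝ)
    (hq_pos : ∀ x, 0 < q x)
    (hq_sum : ∑ x, q x = 1)
    (hq_stat : ∀ y, ∑ x, q x * α x y = 0)
    (p : ℝ → X → ℝ)
    (hp_nonneg : ∀ t x, 0 ≤ p t x)
    (hp_sum : ∀ t, ∑ x, p t x = 1)
    (hp_ode : ∀ t y, HasDerivAt (fun s => p s y) (∑ x, p t x * α x y) t)
    (t : ℝ)
    (hne : p t ≠ q)
    (hpos : ∀ x, 0 < p t x) :
    deriv (fun s => ∑ x, p s x * Real.log (p s x / q x)) t < 0 := by
  classical
  set r : X → ℝ := fun x => p t x / q x with hrdef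
  have hrpos : ∀ x, 0 < r x := fun x => div_pos (hpos x) (hq_pos x)
  set L : X → ℝ := fun x => Real.log (r x) with hLdef
  -- the value of each sum of a row of α is zero
  have hrow : ∀ x, (∑ y, α x y) = 0 := by
    intro x
    rw [← Finset.add_sum_erase _ _ (Finset.mem_univ x), hα_diag]
    ring
  -- p t x = q x * r x
  have hpq : ∀ x, p t x = q x * r x := by
    intro x
    field_simp [hrdef]
    show p t x = q x * (p t x / q x); rw [mul_div_assoc', mul_div_cancel_left₀ _ (hq_pos x).ne']
  -- Step 1: compute the derivative
  have hD : HasDerivAt (fun s => ∑ x, p s x * Real.log (p s x / q x))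
      (∑ y, (∑ x, p t x * α x y) * (L y + 1)) t := by
    apply HasDerivAt.fun_sum
    intro y _
    have hp := hp_ode t y
    have hdiv : HasDerivAt (fun s => p s y / q y) ((∑ x, p t x * α x y) / q y) t :=
      hp.div_const _
    have hne0 : p t y / q y ≠ 0 := ne_of_gt (hrpos y)
    have hlog := hdiv.log hne0
    have hmul := hp.mul hlog
    convert hmul using 1
    · rfl
    · rfl
    have hqy := (hq_pos y).ne'
    have hpy := (hpos y).ne'
    field_simp [hLdef, hrdef]
    ring
  rw [hD.deriv]
  -- Step 2: algebraic identity
  set G : X → X → ℝ := fun x y => q x * α x y * (r x * (L y - L x) - (r y - r x)) with hGdef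
  have hGdiag : ∀ x, G x x = 0 := by
    intro x; simp [hGdef]
  have key : (∑ y, (∑ x, p t x * α x y) * (L y + 1)) = ∑ x, ∑ y, G x y := by
    have h1 : (∑ y, (∑ x, p t x * α x y) * (L y + 1))
        = ∑ x, ∑ y, p t x * α x y * (L y + 1) := by
      rw [Finset.sum_comm]
      congr 1
      ext y
      rw [Finset.sum_mul]
    rw [h1]
    have h2 : ∀ x, ∑ y, (p t x * α x y * (L y + 1) - G x y)
        = q x * r x * L x * (∑ y, α x y) + ∑ y, q x * α x y * r y := by
      intro x
      rw [Finset.mul_sum, ← Finset.sum_add_distrib]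
      congr 1
      ext y
      rw [hGdef, hpq x]
      ring
    have h3 : (∑ x, ∑ y, (p t x * α x y * (L y + 1) - G x y)) = 0 := by
      have h4 : (∑ x, ∑ y, q x * α x y * r y) = ∑ y, (∑ x, q x * α x y) * r y := by
        rw [Finset.sum_comm]
        congr 1
        ext y
        rw [Finset.sum_mul]
      calc (∑ x, ∑ y, (p t x * α x y * (L y + 1) - G x y))
          = ∑ x, (q x * r x * L x * (∑ y, α x y) + ∑ y, q x * α x y * r y) := by
            congr 1; ext x; exact h2 x
        _ = ∑ x, ∑ y, q x * α x y * r y := by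
            congr 1; ext x; rw [hrow x]; ring
        _ = ∑ y, (∑ x, q x * α x y) * r y := h4
        _ = 0 := by simp [hq_stat]
    have h5 : (∑ x, ∑ y, (p t x * α x y * (L y + 1) - G x y))
        = (∑ x, ∑ y, p t x * α x y * (L y + 1)) - ∑ x, ∑ y, G x y := by
      rw [← Finset.sum_sub_distrib]
      congr 1
      ext x
      rw [← Finset.sum_sub_distrib]
    linarith [h3, h5.symm]
  rw [key]
  -- Step 3: each off-diagonal term is ≤ 0
  have hterm : ∀ x y, x ≠ y → G x y ≤ 0 := by
    intro x y hxy
    have ha := hrpos x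
    have hb := hrpos y
    have hlog : Real.log (r y / r x) ≤ r y / r x - 1 :=
      Real.log_le_sub_one_of_pos (div_pos hb ha)
    have hlogd : Real.log (r y / r x) = L y - L x := by
      rw [hLdef]; exact Real.log_div hb.ne' ha.ne'
    have hin : r x * (L y - L x) - (r y - r x) ≤ 0 := by
      rw [← hlogd]
      have := mul_le_mul_of_nonneg_left hlog ha.le
      have h2 : r x * (r y / r x - 1) = r y - r x := by
        field_simp
      nlinarith
    have hc : 0 ≤ q x * α x y := mul_nonneg (hq_pos x).le (hα_off x y hxy)
    exact mul_nonpos_of_nonneg_of_nonpos hc hin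
  -- Step 4: strictness, using connectivity
  have hex : ∃ u v, 0 < α u v ∧ r u ≠ r v := by
    by_contra hcon
    push_neg at hcon
    have hall : ∀ x y, r x = r y := by
      intro x y
      induction hα_conn x y with
      | refl => rfl
      | tail _ e ih => exact ih.trans (hcon _ _ e)
    apply hne
    have x0 : X := Classical.arbitrary X
    have hsum : (1 : ℝ) = ∑ x, q x * r x := by
      rw [← hp_sum t]; congr 1; ext x; exact hpq x
    have hsum2 : (∑ x, q x * r x) = r x0 * ∑ x, q x := by
      rw [Finset.mul_sum]
      congr 1; ext x; rw [hall x x0]; ring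
    rw [hsum2, hq_sum, mul_one] at hsum
    funext x
    rw [hpq x, hall x x0, ← hsum, mul_one]
  obtain ⟨u, v, huv, hruv⟩ := hex
  have hune : u ≠ v := by
    intro h
    subst h
    have : α u u ≤ 0 := by
      rw [hα_diag u]
      have : 0 ≤ ∑ y ∈ Finset.univ.erase u, α u y :=
        Finset.sum_nonneg fun y hy => hα_off u y (Finset.ne_of_mem_erase hy).symm
      linarith
    linarith
  have hGuv : G u v < 0 := by
    have ha := hrpos u
    have hb := hrpos v
    have hne1 : r v / r u ≠ 1 := by
      intro h
      apply hruv
      field_simp at h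
      exact h.symm
    have hlog : Real.log (r v / r u) < r v / r u - 1 :=
      Real.log_lt_sub_one_of_pos (div_pos hb ha) hne1
    have hlogd : Real.log (r v / r u) = L v - L u := by
      rw [hLdef]; exact Real.log_div hb.ne' ha.ne'
    have hin : r u * (L v - L u) - (r v - r u) < 0 := by
      rw [← hlogd]
      have := mul_lt_mul_of_pos_left hlog ha
      have h2 : r u * (r v / r u - 1) = r v - r u := by
        field_simp
      nlinarith
    exact mul_neg_of_pos_of_neg (mul_pos (hq_pos u) huv) hin
  -- Step 5: conclude
  have hrowle : ∀ x, (∑ y, G x y) ≤ 0 := by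
    intro x
    apply Finset.sum_nonpos
    intro y _
    by_cases h : x = y
    · subst h; rw [hGdiag]
    · exact hterm x y h
  have hrowu : (∑ y, G u y) < 0 := by
    have : ∀ y ∈ Finset.univ, G u y ≤ (0 : ℝ) := by
      intro y _
      by_cases h : u = y
      · subst h; rw [hGdiag]
      · exact hterm u y h
    calc (∑ y, G u y) < ∑ _y : X, (0 : ℝ) :=
          Finset.sum_lt_sum this ⟨v, Finset.mem_univ v, hGuv⟩
      _ = 0 := by simp
  calc (∑ x, ∑ y, G x y) < ∑ _x : X, (0 : ℝ) :=
        Finset.sum_lt_sum (fun x _ => hrowle x) ⟨u, Finset.mem_univ u, hrowu⟩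
    _ = 0 := by simp
end

section
/- Let X be a nonempty finite set, let A = (α_{xy}) be an infinitesimal matrix on X (α_{xy} ≥ 0 for x ≠ y, α_{xx} = −∑_{y≠x} α_{xy}) with stationary distribution q satisfying q(x) > 0 for all x and ∑_x q(x)·α_{xy} = 0 for all y. Let p : ℝ → (X → ℝ) be a differentiable solution of the Kolmogorov forward equation ṗ_y = ∑_x p_x·α_{xy} such that p(t) is a strictly positive probability measure. Then, setting f_x(t) = p_x(t)/q(x), the derivative of the relative entropy satisfies d/dt D(p(t)|q) = −∑_{x,y, x≠y} ( (f_x/f_y)·ln(f_x/f_y) − f_x/f_y + 1 )·q(x)·α_{xy}·f_y, where each summand ( u·ln u − u + 1 ) with u = f_x/f_y > 0 is nonnegative; consequently d/dt D(p(t)|q) ≤ 0. -/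
/-- Along a strictly positive differentiable solution `p` of the Kolmogorov
forward equation for an infinitesimal matrix `α` with strictly positive stationary
distribution `q`, the derivative of the relative entropy `D(p(t)|q)` equals
`-∑_{x≠y} ((f_x/f_y)·ln(f_x/f_y) − f_x/f_y + 1)·q_x·α_{xy}·f_y` with `f_x = p_x/q_x`,
each summand factor `u·ln u − u + 1` is nonnegative, and hence the derivative is `≤ 0`. -/
theorem entropy_derivative_formula
    {X : Type*} [Fintype X] [Nonempty X] [DecidableEq X]
    (α : X → X → ℝ)
    (hα_off : ∀ x y, x ≠ y → 0 ≤ α x y)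
    (hα_diag : ∀ x, α x x = -∑ y ∈ Finset.univ.erase x, α x y)
    (q : X → ℝ)
    (hq_pos : ∀ x, 0 < q x)
    (hq_sum : ∑ x, q x = 1)
    (hq_stat : ∀ y, ∑ x, q x * α x y = 0)
    (p : ℝ → X → ℝ)
    (hp_pos : ∀ t x, 0 < p t x)
    (hp_sum : ∀ t, ∑ x, p t x = 1)
    (hp_ode : ∀ t y, HasDerivAt (fun s => p s y) (∑ x, p t x * α x y) t)
    (t : ℝ) :
    (deriv (fun s => ∑ x, p s x * Real.log (p s x / q x)) t =
      -∑ x, ∑ y ∈ Finset.univ.erase x,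
        ((p t x / q x) / (p t y / q y) * Real.log ((p t x / q x) / (p t y / q y))
          - (p t x / q x) / (p t y / q y) + 1) * q x * α x y * (p t y / q y)) ∧
    (∀ x y : X,
      0 ≤ (p t x / q x) / (p t y / q y) * Real.log ((p t x / q x) / (p t y / q y))
          - (p t x / q x) / (p t y / q y) + 1) ∧
    deriv (fun s => ∑ x, p s x * Real.log (p s x / q x)) t ≤ 0 := by
  have hfpos : ∀ x, (0:ℝ) < p t x / q x := fun x => div_pos (hp_pos t x) (hq_pos x)
  -- nonnegativity of u log u - u + 1
  have key : ∀ u : ℝ, 0 < u → 0 ≤ u * Real.log u - u + 1 := by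
    intro u hu
    have h := Real.log_le_sub_one_of_pos (show (0:ℝ) < u⁻¹ by positivity)
    rw [Real.log_inv] at h
    have h2 := mul_le_mul_of_nonneg_left h hu.le
    have h3 : u * u⁻¹ = 1 := mul_inv_cancel₀ hu.ne'
    nlinarith
  have key2 : ∀ x y : X,
      0 ≤ (p t x / q x) / (p t y / q y) * Real.log ((p t x / q x) / (p t y / q y))
          - (p t x / q x) / (p t y / q y) + 1 :=
    fun x y => key _ (div_pos (hfpos x) (hfpos y))
  set D : X → ℝ := fun y => ∑ x, p t x * α x y with hD
  set L : X → ℝ := fun x => Real.log (p t x / q x) with hL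
  set E : X → X → ℝ := fun x y =>
      ((p t x / q x) / (p t y / q y) * Real.log ((p t x / q x) / (p t y / q y))
          - (p t x / q x) / (p t y / q y) + 1) * q x * α x y * (p t y / q y) with hE
  -- row sums are zero
  have hrow : ∀ x, ∑ y, α x y = 0 := by
    intro x
    rw [← Finset.add_sum_erase Finset.univ (α x) (Finset.mem_univ x), hα_diag]
    ring
  -- derivative computation
  have hderiv : HasDerivAt (fun s => ∑ x, p s x * Real.log (p s x / q x))
      (∑ x, (D x * L x + D x)) t := by
    apply HasDerivAt.fun_sum
    intro x _
    have h1 : HasDerivAt (fun s => p s x) (D x) t := hp_ode t x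
    have h2 : HasDerivAt (fun s => p s x / q x) (D x / q x) t := h1.div_const _
    have h3 : HasDerivAt (fun s => Real.log (p s x / q x)) ((D x / q x) / (p t x / q x)) t :=
      h2.log (hfpos x).ne'
    have h4 := h1.fun_mul h3
    convert h4 using 1
    · rfl
    have hq := (hq_pos x).ne'
    have hp := (hp_pos t x).ne'
    simp only [hL]
    field_simp
  -- sum of D is zero
  have hsum : ∑ x, D x = 0 := by
    rw [hD, Finset.sum_comm]
    rw [Finset.sum_congr rfl (fun x (_ : x ∈ Finset.univ) => by
      rw [← Finset.mul_sum, hrow x, mul_zero])]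
    simp
  -- E x x = 0
  have hExx : ∀ x, E x x = 0 := by
    intro x
    simp [hE, div_self (hfpos x).ne']
  -- pointwise identity for E
  have hEeq : ∀ x y, E x y =
      p t x * α x y * L x - p t x * α x y * L y - p t x * α x y + q x * α x y * (p t y / q y) := by
    intro x y
    have hx := (hfpos x).ne'
    have hy := (hfpos y).ne'
    simp only [hE, hL, Real.log_div hx hy]
    have hqx := (hq_pos x).ne'
    have hqy := (hq_pos y).ne'
    have hpx := (hp_pos t x).ne'
    have hpy := (hp_pos t y).ne'
    field_simp
  -- the four partial sums
  have t1 : ∑ x, ∑ y, p t x * α x y * L x = 0 := by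
    refine Finset.sum_eq_zero fun x _ => ?_
    have h : ∑ y, p t x * α x y * L x = p t x * L x * ∑ y, α x y := by
      rw [Finset.mul_sum]; exact Finset.sum_congr rfl fun y _ => by ring
    rw [h, hrow, mul_zero]
  have t2 : ∑ x, ∑ y, p t x * α x y = 0 := by
    refine Finset.sum_eq_zero fun x _ => ?_
    rw [← Finset.mul_sum, hrow, mul_zero]
  have t3 : ∑ x, ∑ y, q x * α x y * (p t y / q y) = 0 := by
    rw [Finset.sum_comm]
    refine Finset.sum_eq_zero fun y _ => ?_
    rw [← Finset.sum_mul, hq_stat, zero_mul]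
  have t4 : ∑ x, ∑ y, p t x * α x y * L y = ∑ y, D y * L y := by
    rw [Finset.sum_comm]
    refine Finset.sum_congr rfl fun y _ => ?_
    rw [hD, Finset.sum_mul]
  -- full double sum equals erase double sum
  have hfull : ∑ x, ∑ y ∈ Finset.univ.erase x, E x y = ∑ x, ∑ y, E x y := by
    refine Finset.sum_congr rfl fun x _ => ?_
    rw [← Finset.add_sum_erase Finset.univ (E x) (Finset.mem_univ x), hExx, zero_add]
  have hdouble : ∑ x, ∑ y ∈ Finset.univ.erase x, E x y = -∑ y, D y * L y := by
    rw [hfull]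
    calc ∑ x, ∑ y, E x y
        = ∑ x, ∑ y, (p t x * α x y * L x - p t x * α x y * L y - p t x * α x y
            + q x * α x y * (p t y / q y)) :=
          Finset.sum_congr rfl fun x _ => Finset.sum_congr rfl fun y _ => hEeq x y
      _ = (∑ x, ∑ y, p t x * α x y * L x) - (∑ x, ∑ y, p t x * α x y * L y)
            - (∑ x, ∑ y, p t x * α x y) + ∑ x, ∑ y, q x * α x y * (p t y / q y) := by
          simp [Finset.sum_add_distrib, Finset.sum_sub_distrib]
      _ = -∑ y, D y * L y := by rw [t1, t2, t3, t4]; ring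
  have hderiv' : deriv (fun s => ∑ x, p s x * Real.log (p s x / q x)) t
      = ∑ y, D y * L y := by
    rw [hderiv.deriv, Finset.sum_add_distrib, hsum, add_zero]
  refine ⟨?_, key2, ?_⟩
  · rw [hderiv']
    show (∑ y, D y * L y) = -∑ x, ∑ y ∈ Finset.univ.erase x, E x y
    rw [hdouble, neg_neg]
  · rw [hderiv', ← neg_neg (∑ y, D y * L y), ← hdouble]
    simp only [neg_nonpos]
    refine Finset.sum_nonneg fun x _ => Finset.sum_nonneg fun y hy => ?_
    have hxy : x ≠ y := (Finset.ne_of_mem_erase hy).symm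
    exact mul_nonneg (mul_nonneg (mul_nonneg (key2 x y) (hq_pos x).le)
      (hα_off x y hxy)) (hfpos y).le
end

section
/- Fix a finite alphabet K, genome length n, the genome space X = (Fin n → K), a subset I ⊆ Fin n, a symmetric nonnegative similarity function φ on pairs of I-substrings (φ(a,b) = φ(b,a) ≥ 0 for a,b : I → K), a constant κ·dt > 0, and a probability measure μ on X. Define the recombination transition matrix P^{(I)}_μ by P^{(I)}_μ(x→y) = κ·dt·φ(x_I, y_I)·μ_I(y_I) when y ≠ x and y agrees with x outside I, P^{(I)}_μ(x→y) = 0 when y ≠ x and y differs from x outside I, and P^{(I)}_μ(x→x) = 1 − ∑_{y≠x} P^{(I)}_μ(x→y); assume κ·dt is small enough that all diagonal entries are nonnegative, so P^{(I)}_μ is a stochastic matrix. Then the product measure μ̂(x) = μ_{Λ∖I}(x_{Λ∖I})·μ_I(x_I) is invariant under P^{(I)}_μ: ∑_y μ̂(y)·P^{(I)}_μ(y→x) = μ̂(x) for every x ∈ X. -/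
/-- The substring of a genome `x : Fin n → K` on a subset `I` of positions. -/
def subword {K : Type*} {n : ℕ} (I : Finset (Fin n)) (x : Fin n → K) : ↥I → K :=
  fun i => x i.1

/-- The marginal distribution of a measure `μ` on the genome space on a subset `I`. -/
def marginal {K : Type*} [Fintype K] [DecidableEq K] {n : ℕ}
    (μ : (Fin n → K) → ℝ) (I : Finset (Fin n)) (a : ↥I → K) : ℝ :=
  ∑ x : Fin n → K, if subword I x = a then μ x else 0

/-- the product measure `μ̂(x) = μ_{Λ∖I}(x_{Λ∖I})·μ_I(x_I)` is invariant under
the recombination transition matrix `P^{(I)}_μ`. -/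
theorem recombination_invariant_measure
    {K : Type*} [Fintype K] [DecidableEq K] {n : ℕ}
    (I : Finset (Fin n))
    (φ : (↥I → K) → (↥I → K) → ℝ)
    (hφ_symm : ∀ a b, φ a b = φ b a)
    (hφ_nonneg : ∀ a b, 0 ≤ φ a b)
    (κdt : ℝ) (hκdt : 0 < κdt)
    (μ : (Fin n → K) → ℝ)
    (hμ_nonneg : ∀ x, 0 ≤ μ x)
    (hμ_sum : ∑ x, μ x = 1)
    (P : (Fin n → K) → (Fin n → K) → ℝ)
    (hP_off : ∀ x y, y ≠ x → subword Iᶜ y = subword Iᶜ x →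
      P x y = κdt * φ (subword I x) (subword I y) * marginal μ I (subword I y))
    (hP_zero : ∀ x y, y ≠ x → subword Iᶜ y ≠ subword Iᶜ x → P x y = 0)
    (hP_diag : ∀ x, P x x = 1 - ∑ y ∈ Finset.univ.erase x, P x y)
    (hP_diag_nonneg : ∀ x, 0 ≤ P x x) :
    ∀ x : Fin n → K,
      ∑ y, (marginal μ Iᶜ (subword Iᶜ y) * marginal μ I (subword I y)) * P y x =
        marginal μ Iᶜ (subword Iᶜ x) * marginal μ I (subword I x) := by
  intro x
  have key : ∀ y ∈ Finset.univ.erase x,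
      (marginal μ Iᶜ (subword Iᶜ y) * marginal μ I (subword I y)) * P y x =
      (marginal μ Iᶜ (subword Iᶜ x) * marginal μ I (subword I x)) * P x y := by
    intro y hy
    have hyx : y ≠ x := (Finset.mem_erase.mp hy).1
    by_cases hc : subword Iᶜ y = subword Iᶜ x
    · rw [hP_off y x hyx.symm hc.symm, hP_off x y hyx hc, hc, hφ_symm]
      ring
    · rw [hP_zero y x hyx.symm (fun h => hc h.symm), hP_zero x y hyx hc]
      ring
  rw [← Finset.sum_erase_add _ _ (Finset.mem_univ x), Finset.sum_congr rfl key,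
    ← Finset.mul_sum, hP_diag x]
  ring
end

section
/- Fix a finite alphabet K, genome length n, the genome space X = (Fin n → K), a subset I ⊆ Fin n, a symmetric nonnegative similarity function φ (φ(a,b) = φ(b,a) ≥ 0 for a,b : I → K), κ·dt > 0, and a probability measure μ on X; let P^{(I)}_μ be the recombination transition matrix with off-diagonal entries P^{(I)}_μ(x→y) = κ·dt·φ(x_I,y_I)·μ_I(y_I) if y agrees with x outside I (and 0 otherwise), diagonal entries 1 minus the row sums of the off-diagonal entries, assumed nonnegative. Then for every probability measure ν on X whose marginal distributions satisfy ν_{Λ∖I} = μ_{Λ∖I} and ν_I = μ_I, the measure νP^{(I)}_μ defined by (νP^{(I)}_μ)(x) = ∑_y ν(y)·P^{(I)}_μ(y→x) has the same marginal distributions: (νP^{(I)}_μ)_{Λ∖I} = μ_{Λ∖I} and (νP^{(I)}_μ)_I = μ_I. -/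
section Aux

set_option linter.unusedSectionVars false

variable {K : Type*} [Fintype K] [DecidableEq K] {n : ℕ}

/-- Combine a word on `I` and a word on `Iᶜ` into a genome. -/
def combine (I : Finset (Fin n)) (a : ↥I → K) (b : ↥(Iᶜ) → K) : Fin n → K :=
  fun i => if h : i ∈ I then a ⟨i, h⟩ else b ⟨i, Finset.mem_compl.mpr h⟩

@[simp] lemma subword_combine_left (I : Finset (Fin n)) (a : ↥I → K) (b : ↥(Iᶜ) → K) :
    subword I (combine I a b) = a := by
  funext i; simp [subword, combine, i.2]

@[simp] lemma subword_combine_right (I : Finset (Fin n)) (a : ↥I → K) (b : ↥(Iᶜ) → K) :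
    subword Iᶜ (combine I a b) = b := by
  funext i
  have hi : (i : Fin n) ∉ I := Finset.mem_compl.mp i.2
  simp [subword, combine, hi]

lemma combine_subword (I : Finset (Fin n)) (x : Fin n → K) :
    combine I (subword I x) (subword Iᶜ x) = x := by
  funext i; by_cases h : i ∈ I <;> simp [combine, subword, h]

/-- Reindex a sum over genomes as a double sum over pairs of words. -/
lemma sum_genome (I : Finset (Fin n)) (F : (Fin n → K) → ℝ) :
    ∑ x, F x = ∑ c : ↥I → K, ∑ d : ↥(Iᶜ) → K, F (combine I c d) := by
  calc ∑ x, F x = ∑ p : (↥I → K) × (↥(Iᶜ) → K), F (combine I p.1 p.2) :=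
      (Fintype.sum_bijective (fun p : (↥I → K) × (↥(Iᶜ) → K) => combine I p.1 p.2)
        (Equiv.bijective ⟨fun p => combine I p.1 p.2,
          fun x => (subword I x, subword Iᶜ x),
          fun p => by simp, fun x => combine_subword I x⟩) _ _ (fun p => rfl)).symm
    _ = _ := Fintype.sum_prod_type _

/-- regroup a sum over genomes by the value of the `I`-subword -/
lemma regroup (I : Finset (Fin n)) (ν : (Fin n → K) → ℝ) (h : (↥I → K) → ℝ) :
    ∑ y, ν y * h (subword I y) = ∑ c : ↥I → K, marginal ν I c * h c := by
  unfold marginal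
  symm
  calc ∑ c : ↥I → K, (∑ y, if subword I y = c then ν y else 0) * h c
      = ∑ c : ↥I → K, ∑ y, (if subword I y = c then ν y * h c else 0) := by
        refine Finset.sum_congr rfl fun c _ => ?_
        rw [Finset.sum_mul]
        exact Finset.sum_congr rfl fun y _ => by rw [ite_mul, zero_mul]
    _ = ∑ y, ∑ c : ↥I → K, (if subword I y = c then ν y * h c else 0) := Finset.sum_comm
    _ = ∑ y, ν y * h (subword I y) := by
        refine Finset.sum_congr rfl fun y _ => ?_
        simp

end Aux

/-- the recombination transition matrix `P^{(I)}_μ` preserves the marginal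
distributions on `I` and on its complement, for every probability measure `ν` whose
marginals coincide with those of `μ`. -/
theorem recombination_preserves_marginals
    {K : Type*} [Fintype K] [DecidableEq K] {n : ℕ}
    (I : Finset (Fin n))
    (φ : (↥I → K) → (↥I → K) → ℝ)
    (hφ_symm : ∀ a b, φ a b = φ b a)
    (hφ_nonneg : ∀ a b, 0 ≤ φ a b)
    (κdt : ℝ) (hκdt : 0 < κdt)
    (μ : (Fin n → K) → ℝ)
    (hμ_nonneg : ∀ x, 0 ≤ μ x)
    (hμ_sum : ∑ x, μ x = 1)
    (P : (Fin n → K) → (Fin n → K) → ℝ)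
    (hP_off : ∀ x y, y ≠ x → subword Iᶜ y = subword Iᶜ x →
      P x y = κdt * φ (subword I x) (subword I y) * marginal μ I (subword I y))
    (hP_zero : ∀ x y, y ≠ x → subword Iᶜ y ≠ subword Iᶜ x → P x y = 0)
    (hP_diag : ∀ x, P x x = 1 - ∑ y ∈ Finset.univ.erase x, P x y)
    (hP_diag_nonneg : ∀ x, 0 ≤ P x x)
    (ν : (Fin n → K) → ℝ)
    (hν_nonneg : ∀ x, 0 ≤ ν x)
    (hν_sum : ∑ x, ν x = 1)
    (hν_margI : ∀ a : ↥I → K, marginal ν I a = marginal μ I a)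
    (hν_margIc : ∀ b : ↥(Iᶜ) → K, marginal ν Iᶜ b = marginal μ Iᶜ b) :
    (∀ a : ↥I → K, marginal (fun x => ∑ y, ν y * P y x) I a = marginal μ I a) ∧
    (∀ b : ↥(Iᶜ) → K, marginal (fun x => ∑ y, ν y * P y x) Iᶜ b = marginal μ Iᶜ b) := by
  -- sum of a row of P over an I-fiber
  have key : ∀ (y : Fin n → K) (a : ↥I → K),
      ∑ x, (if subword I x = a then P y x else 0) =
      if subword I y = a then P y y
      else κdt * φ (subword I y) a * marginal μ I a := by
    intro y a
    rw [sum_genome I]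
    simp only [subword_combine_left]
    have pull : ∀ c : ↥I → K,
        (∑ d : ↥(Iᶜ) → K, if c = a then P y (combine I c d) else 0) =
        if c = a then ∑ d : ↥(Iᶜ) → K, P y (combine I c d) else 0 := by
      intro c; split <;> simp
    rw [Finset.sum_congr rfl (fun c _ => pull c),
      Finset.sum_ite_eq' Finset.univ a (fun c => ∑ d : ↥(Iᶜ) → K, P y (combine I c d)),
      if_pos (Finset.mem_univ a)]
    rw [Finset.sum_eq_single (subword Iᶜ y)]
    · by_cases h : subword I y = a
      · rw [if_pos h, ← h, combine_subword]
      · rw [if_neg h]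
        have hne : combine I a (subword Iᶜ y) ≠ y := by
          intro he; apply h; rw [← he]; simp
        rw [hP_off y _ hne (by simp)]
        simp
    · intro d _ hd
      have hne : combine I a d ≠ y := by
        intro he; apply hd; rw [← subword_combine_right I a d, he]
      exact hP_zero y _ hne (by simpa using hd)
    · intro h; exact absurd (Finset.mem_univ _) h
  -- row sums of P are 1
  have rowsum : ∀ y : Fin n → K, ∑ x, P y x = 1 := by
    intro y
    rw [← Finset.add_sum_erase Finset.univ (P y) (Finset.mem_univ y), hP_diag y]
    ring
  -- sum of a row of P over an Iᶜ-fiber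
  have keyc : ∀ (y : Fin n → K) (b : ↥(Iᶜ) → K),
      ∑ x, (if subword Iᶜ x = b then P y x else 0) =
      if subword Iᶜ y = b then 1 else 0 := by
    intro y b
    rw [sum_genome I]
    simp only [subword_combine_right]
    by_cases hb : subword Iᶜ y = b
    · rw [if_pos hb]
      calc ∑ c : ↥I → K, ∑ d : ↥(Iᶜ) → K, (if d = b then P y (combine I c d) else 0)
          = ∑ c : ↥I → K, ∑ d : ↥(Iᶜ) → K, P y (combine I c d) := by
            refine Finset.sum_congr rfl fun c _ => Finset.sum_congr rfl fun d _ => ?_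
            by_cases h : d = b
            · rw [if_pos h]
            · rw [if_neg h]
              have hne : combine I c d ≠ y := by
                intro he; apply h
                rw [← subword_combine_right I c d, he, hb]
              exact (hP_zero y _ hne (by rw [subword_combine_right, hb]; exact h)).symm
        _ = ∑ x, P y x := (sum_genome I (P y)).symm
        _ = 1 := rowsum y
    · rw [if_neg hb]
      refine Finset.sum_eq_zero fun c _ => Finset.sum_eq_zero fun d _ => ?_
      by_cases h : d = b
      · rw [if_pos h]
        have hne : combine I c d ≠ y := by
          intro he; apply hb; rw [← he, subword_combine_right]; exact h
        exact hP_zero y _ hne (by rw [subword_combine_right, h]; exact fun hh => hb hh.symm)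
      · rw [if_neg h]
  -- diagonal entries in terms of the I-subword
  have diag : ∀ y : Fin n → K,
      P y y = 1 - ∑ c ∈ Finset.univ.erase (subword I y),
        κdt * φ (subword I y) c * marginal μ I c := by
    intro y
    have h1 : ∑ x, P y x =
        ∑ c : ↥I → K, ∑ x, (if subword I x = c then P y x else 0) := by
      rw [Finset.sum_comm]
      refine Finset.sum_congr rfl fun x _ => ?_
      simp
    rw [rowsum y] at h1
    have h2 : ∑ c : ↥I → K, ∑ x, (if subword I x = c then P y x else 0) =
        P y y + ∑ c ∈ Finset.univ.erase (subword I y),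
          κdt * φ (subword I y) c * marginal μ I c := by
      rw [← Finset.add_sum_erase Finset.univ _ (Finset.mem_univ (subword I y))]
      rw [key y (subword I y), if_pos rfl]
      congr 1
      refine Finset.sum_congr rfl fun c hc => ?_
      rw [key y c, if_neg (Finset.ne_of_mem_erase hc).symm]
    rw [h2] at h1
    linarith
  constructor
  · intro a
    unfold marginal
    have swap : ∑ x, (if subword I x = a then ∑ y, ν y * P y x else 0) =
        ∑ y, ν y * ∑ x, (if subword I x = a then P y x else 0) := by
      calc ∑ x, (if subword I x = a then ∑ y, ν y * P y x else 0)
          = ∑ x, ∑ y, (if subword I x = a then ν y * P y x else 0) := by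
            refine Finset.sum_congr rfl fun x _ => ?_; split <;> simp
        _ = ∑ y, ∑ x, (if subword I x = a then ν y * P y x else 0) := Finset.sum_comm
        _ = ∑ y, ν y * ∑ x, (if subword I x = a then P y x else 0) := by
            refine Finset.sum_congr rfl fun y _ => ?_
            rw [Finset.mul_sum]
            exact Finset.sum_congr rfl fun x _ => by split <;> simp
    rw [swap]
    have hstep : ∀ y : Fin n → K,
        ν y * ∑ x, (if subword I x = a then P y x else 0) =
        ν y * (fun c => if c = a then
            1 - ∑ c' ∈ Finset.univ.erase a, κdt * φ a c' * marginal μ I c'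
          else κdt * φ c a * marginal μ I a) (subword I y) := by
      intro y
      rw [key y a]
      beta_reduce
      by_cases h : subword I y = a
      · rw [if_pos h, if_pos h, diag y, h]
      · rw [if_neg h, if_neg h]
    rw [Finset.sum_congr rfl (fun y _ => hstep y),
      regroup I ν (fun c => if c = a then
          1 - ∑ c' ∈ Finset.univ.erase a, κdt * φ a c' * marginal μ I c'
        else κdt * φ c a * marginal μ I a)]
    simp only [hν_margI]
    rw [← Finset.add_sum_erase Finset.univ _ (Finset.mem_univ a)]
    beta_reduce
    rw [if_pos rfl]
    have h3 : ∑ c ∈ Finset.univ.erase a, marginal μ I c *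
        (if c = a then 1 - ∑ c' ∈ Finset.univ.erase a, κdt * φ a c' * marginal μ I c'
          else κdt * φ c a * marginal μ I a) =
        (∑ c' ∈ Finset.univ.erase a, κdt * φ a c' * marginal μ I c') * marginal μ I a := by
      rw [Finset.sum_mul]
      refine Finset.sum_congr rfl fun c hc => ?_
      rw [if_neg (Finset.ne_of_mem_erase hc), hφ_symm]
      ring
    rw [h3]
    show _ = marginal μ I a
    ring
  · intro b
    unfold marginal
    have swap : ∑ x, (if subword Iᶜ x = b then ∑ y, ν y * P y x else 0) =
        ∑ y, ν y * ∑ x, (if subword Iᶜ x = b then P y x else 0) := by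
      calc ∑ x, (if subword Iᶜ x = b then ∑ y, ν y * P y x else 0)
          = ∑ x, ∑ y, (if subword Iᶜ x = b then ν y * P y x else 0) := by
            refine Finset.sum_congr rfl fun x _ => ?_; split <;> simp
        _ = ∑ y, ∑ x, (if subword Iᶜ x = b then ν y * P y x else 0) := Finset.sum_comm
        _ = ∑ y, ν y * ∑ x, (if subword Iᶜ x = b then P y x else 0) := by
            refine Finset.sum_congr rfl fun y _ => ?_
            rw [Finset.mul_sum]
            exact Finset.sum_congr rfl fun x _ => by split <;> simp
    rw [swap]
    have hstep : ∀ y : Fin n → K,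
        ν y * ∑ x, (if subword Iᶜ x = b then P y x else 0) =
        (if subword Iᶜ y = b then ν y else 0) := by
      intro y
      rw [keyc y b]
      by_cases h : subword Iᶜ y = b <;> simp [h]
    rw [Finset.sum_congr rfl (fun y _ => hstep y)]
    exact hν_margIc b
end

section
/- Fix a finite alphabet K, genome length n, the genome space X = (Fin n → K), a subset I ⊆ Fin n, a symmetric nonnegative similarity function φ on pairs of I-substrings, κ·dt > 0, and a strictly positive probability measure μ on X; let P^{(I)}_μ be the recombination transition matrix (off-diagonal entries κ·dt·φ(x_I,y_I)·μ_I(y_I) for y agreeing with x outside I, zero otherwise, diagonal entries making rows sum to 1 and assumed nonnegative), and let μ̂(x) = μ_{Λ∖I}(x_{Λ∖I})·μ_I(x_I). Then ∑_x (ln μ̂(x))·(μP^{(I)}_μ)(x) = ∑_x (ln μ̂(x))·μ(x), where (μP^{(I)}_μ)(x) = ∑_y μ(y)·P^{(I)}_μ(y→x). -/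
set_option linter.unusedSectionVars false
section aux
variable {K : Type*} [Fintype K] [DecidableEq K] {n : ℕ}

def glue (I : Finset (Fin n)) (a : ↥I → K) (c : ↥(Iᶜ) → K) : Fin n → K :=
  fun i => if h : i ∈ I then a ⟨i, h⟩ else c ⟨i, Finset.mem_compl.2 h⟩

lemma subword_glue_left (I : Finset (Fin n)) (a : ↥I → K) (c : ↥(Iᶜ) → K) :
    subword I (glue I a c) = a := by
  funext i; simp [subword, glue, i.2]

lemma subword_glue_right (I : Finset (Fin n)) (a : ↥I → K) (c : ↥(Iᶜ) → K) :
    subword Iᶜ (glue I a c) = c := by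
  funext i
  have hi : (i : Fin n) ∉ I := Finset.mem_compl.1 i.2
  simp [subword, glue, hi]

lemma glue_subword (I : Finset (Fin n)) (x : Fin n → K) :
    glue I (subword I x) (subword Iᶜ x) = x := by
  funext i; by_cases h : i ∈ I <;> simp [glue, subword, h]

def genomeEquiv (I : Finset (Fin n)) : (Fin n → K) ≃ (↥I → K) × (↥(Iᶜ) → K) where
  toFun x := (subword I x, subword Iᶜ x)
  invFun p := glue I p.1 p.2
  left_inv x := glue_subword I x
  right_inv p := by cases p; simp [subword_glue_left, subword_glue_right]

lemma sum_glue (I : Finset (Fin n)) (F : (Fin n → K) → ℝ) :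
    ∑ x, F x = ∑ a : ↥I → K, ∑ c : ↥(Iᶜ) → K, F (glue I a c) := by
  have h1 := Fintype.sum_prod_type (f := fun p : (↥I → K) × (↥(Iᶜ) → K) => F (glue I p.1 p.2))
  rw [← h1]
  exact Fintype.sum_equiv (genomeEquiv I) F (fun p => F (glue I p.1 p.2))
    (fun x => by simp [genomeEquiv, glue_subword])

lemma marginal_glue (I : Finset (Fin n)) (μ : (Fin n → K) → ℝ) (a : ↥I → K) :
    marginal μ I a = ∑ c : ↥(Iᶜ) → K, μ (glue I a c) := by
  rw [marginal, sum_glue I]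
  simp [subword_glue_left, Finset.sum_ite_eq']

lemma marginal_compl_glue (I : Finset (Fin n)) (μ : (Fin n → K) → ℝ) (c : ↥(Iᶜ) → K) :
    marginal μ Iᶜ c = ∑ a : ↥I → K, μ (glue I a c) := by
  rw [marginal, sum_glue I]
  simp [subword_glue_right, Finset.sum_ite_eq']

lemma marginal_pos (J : Finset (Fin n)) (μ : (Fin n → K) → ℝ) (hμ : ∀ x, 0 < μ x)
    (x : Fin n → K) : 0 < marginal μ J (subword J x) := by
  rw [marginal]
  apply Finset.sum_pos'
  · intro i _; by_cases h : subword J i = subword J x <;> simp [h, (hμ i).le]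
  · exact ⟨x, Finset.mem_univ x, by simp [hμ x]⟩

end aux

/-- one step of the recombination transition matrix `P^{(I)}_μ` leaves the
mean of `ln μ̂` unchanged, where `μ̂(x) = μ_{Λ∖I}(x_{Λ∖I})·μ_I(x_I)`. -/
theorem recombination_preserves_log_product_mean
    {K : Type*} [Fintype K] [DecidableEq K] {n : ℕ}
    (I : Finset (Fin n))
    (φ : (↥I → K) → (↥I → K) → ℝ)
    (hφ_symm : ∀ a b, φ a b = φ b a)
    (hφ_nonneg : ∀ a b, 0 ≤ φ a b)
    (κdt : ℝ) (hκdt : 0 < κdt)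
    (μ : (Fin n → K) → ℝ)
    (hμ_pos : ∀ x, 0 < μ x)
    (hμ_sum : ∑ x, μ x = 1)
    (P : (Fin n → K) → (Fin n → K) → ℝ)
    (hP_off : ∀ x y, y ≠ x → subword Iᶜ y = subword Iᶜ x →
      P x y = κdt * φ (subword I x) (subword I y) * marginal μ I (subword I y))
    (hP_zero : ∀ x y, y ≠ x → subword Iᶜ y ≠ subword Iᶜ x → P x y = 0)
    (hP_diag : ∀ x, P x x = 1 - ∑ y ∈ Finset.univ.erase x, P x y)
    (hP_diag_nonneg : ∀ x, 0 ≤ P x x) :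
    ∑ x, Real.log (marginal μ Iᶜ (subword Iᶜ x) * marginal μ I (subword I x)) *
        (∑ y, μ y * P y x) =
      ∑ x, Real.log (marginal μ Iᶜ (subword Iᶜ x) * marginal μ I (subword I x)) * μ x := by
  set f : (Fin n → K) → ℝ :=
    fun x => Real.log (marginal μ Iᶜ (subword Iᶜ x) * marginal μ I (subword I x)) with hf
  have hmI : ∀ x, 0 < marginal μ I (subword I x) := marginal_pos I μ hμ_pos
  have hmC : ∀ x, 0 < marginal μ Iᶜ (subword Iᶜ x) := marginal_pos Iᶜ μ hμ_pos
  -- row sums are 1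
  have hrow : ∀ y, ∑ x, P y x = 1 := by
    intro y
    rw [← Finset.sum_erase_add _ _ (Finset.mem_univ y), hP_diag y]
    ring
  -- the indicator form of the off-diagonal contribution
  set G : (Fin n → K) → (Fin n → K) → ℝ := fun y x =>
    if subword Iᶜ x = subword Iᶜ y then
      μ y * (κdt * φ (subword I y) (subword I x) * marginal μ I (subword I x)) *
        (Real.log (marginal μ I (subword I x)) - Real.log (marginal μ I (subword I y)))
    else 0 with hG
  have hterm : ∀ y x, μ y * ((f x - f y) * P y x) = G y x := by
    intro y x
    by_cases hxy : x = y
    · subst hxy; simp [hG]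
    · by_cases hc : subword Iᶜ x = subword Iᶜ y
      · have hP : P y x = κdt * φ (subword I y) (subword I x) * marginal μ I (subword I x) :=
          hP_off y x hxy hc
        have hfx : f x - f y =
            Real.log (marginal μ I (subword I x)) - Real.log (marginal μ I (subword I y)) := by
          rw [hf]
          simp only
          rw [hc, Real.log_mul (hmC y).ne' (hmI x).ne', Real.log_mul (hmC y).ne' (hmI y).ne']
          ring
        rw [hP, hfx, hG]
        simp only [if_pos hc]
        ring
      · rw [hP_zero y x hxy hc, hG]
        simp [hc]
  -- main rearrangement
  have lhs_eq : ∀ y, ∑ x, f x * (μ y * P y x) = f y * μ y + ∑ x, G y x := by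
    intro y
    have h1 : ∑ x, f x * (μ y * P y x)
        = μ y * (f y * ∑ x, P y x) + ∑ x, μ y * ((f x - f y) * P y x) := by
      rw [Finset.mul_sum, Finset.mul_sum, ← Finset.sum_add_distrib]
      exact Finset.sum_congr rfl (fun x _ => by ring)
    rw [h1, hrow y]
    simp only [mul_one]
    rw [Finset.sum_congr rfl (fun x _ => hterm y x)]
    ring_nf
  calc ∑ x, f x * (∑ y, μ y * P y x)
      = ∑ y, ∑ x, f x * (μ y * P y x) := by
        rw [Finset.sum_comm]
        exact Finset.sum_congr rfl (fun x _ => by rw [Finset.mul_sum])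
    _ = ∑ y, (f y * μ y + ∑ x, G y x) := Finset.sum_congr rfl (fun y _ => lhs_eq y)
    _ = ∑ y, f y * μ y + ∑ y, ∑ x, G y x := Finset.sum_add_distrib
    _ = ∑ y, f y * μ y := by
        have hD : ∑ y, ∑ x, G y x = 0 := by
          have hrw : ∀ y, ∑ x, G y x = ∑ a : ↥I → K,
              μ y * (κdt * φ (subword I y) a * marginal μ I a) *
                (Real.log (marginal μ I a) - Real.log (marginal μ I (subword I y))) := by
            intro y
            rw [sum_glue I (G y)]
            refine Finset.sum_congr rfl (fun a _ => ?_)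
            simp only [hG, subword_glue_left, subword_glue_right]
            rw [Finset.sum_ite_eq' Finset.univ (subword Iᶜ y) fun _ =>
              μ y * (κdt * φ (subword I y) a * marginal μ I a) *
                (Real.log (marginal μ I a) - Real.log (marginal μ I (subword I y)))]
            simp
          rw [Finset.sum_congr rfl (fun y _ => hrw y)]
          rw [sum_glue I (fun y => ∑ a : ↥I → K,
              μ y * (κdt * φ (subword I y) a * marginal μ I a) *
                (Real.log (marginal μ I a) - Real.log (marginal μ I (subword I y))))]
          simp only [subword_glue_left]
          set F : (↥I → K) → (↥I → K) → ℝ := fun b a =>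
            marginal μ I b * (κdt * φ b a * marginal μ I a) *
              (Real.log (marginal μ I a) - Real.log (marginal μ I b)) with hF
          have step2 : ∀ b : ↥I → K, (∑ c : ↥(Iᶜ) → K, ∑ a : ↥I → K,
              μ (glue I b c) * (κdt * φ b a * marginal μ I a) *
                (Real.log (marginal μ I a) - Real.log (marginal μ I b)))
              = ∑ a : ↥I → K, F b a := by
            intro b
            rw [Finset.sum_comm]
            refine Finset.sum_congr rfl (fun a _ => ?_)
            calc ∑ c : ↥(Iᶜ) → K, μ (glue I b c) * (κdt * φ b a * marginal μ I a) *
                  (Real.log (marginal μ I a) - Real.log (marginal μ I b))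
                = (∑ c : ↥(Iᶜ) → K, μ (glue I b c)) * ((κdt * φ b a * marginal μ I a) *
                  (Real.log (marginal μ I a) - Real.log (marginal μ I b))) := by
                  rw [Finset.sum_mul]
                  exact Finset.sum_congr rfl fun c _ => by ring
              _ = F b a := by rw [← marginal_glue, hF]; ring
          rw [Finset.sum_congr rfl (fun b _ => step2 b)]
          have hanti : ∀ b a : ↥I → K, F b a = -F a b := by
            intro b a
            rw [hF]
            simp only
            rw [hφ_symm a b]
            ring
          have hsym : ∑ b : ↥I → K, ∑ a : ↥I → K, F b a
              = -∑ b : ↥I → K, ∑ a : ↥I → K, F b a := by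
            calc ∑ b : ↥I → K, ∑ a : ↥I → K, F b a
                = ∑ a : ↥I → K, ∑ b : ↥I → K, F b a := Finset.sum_comm
              _ = ∑ a : ↥I → K, ∑ b : ↥I → K, -F a b :=
                  Finset.sum_congr rfl (fun a _ => Finset.sum_congr rfl
                    (fun b _ => hanti b a))
              _ = -∑ b : ↥I → K, ∑ a : ↥I → K, F b a := by
                  simp [Finset.sum_neg_distrib]
          linarith
        rw [hD, add_zero]
end

section
/- Fix a finite alphabet K, genome length n, the genome space X = (Fin n → K), a subset I ⊆ Fin n, a symmetric nonnegative similarity function φ on pairs of I-substrings, κ·dt > 0, and a probability measure μ on X; let P^{(I)}_μ be the recombination transition matrix (off-diagonal entries κ·dt·φ(x_I,y_I)·μ_I(y_I) for y agreeing with x outside I, zero otherwise, diagonal entries making rows sum to 1 and assumed nonnegative). Then one recombination step does not increase the negative entropy: ∑_x (μP^{(I)}_μ)(x)·ln((μP^{(I)}_μ)(x)) ≤ ∑_x μ(x)·ln(μ(x)), with the convention 0·ln 0 = 0. -/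
section Aux
variable {K : Type*} [Fintype K] [DecidableEq K] {n : ℕ}

lemma marginal_nonneg (μ : (Fin n → K) → ℝ) (hμ : ∀ x, 0 ≤ μ x) (I : Finset (Fin n))
    (a : ↥I → K) : 0 ≤ marginal μ I a :=
  Finset.sum_nonneg fun x _ => by split <;> [exact hμ x; exact le_refl 0]

lemma le_marginal (μ : (Fin n → K) → ℝ) (hμ : ∀ x, 0 ≤ μ x) (I : Finset (Fin n))
    (x : Fin n → K) : μ x ≤ marginal μ I (subword I x) := by
  have h := Finset.single_le_sum
    (f := fun y => if subword I y = subword I x then μ y else 0)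
    (fun y _ => by split <;> [exact hμ y; exact le_refl 0])
    (Finset.mem_univ x)
  simpa [marginal] using h

lemma sum_marginal_mul (μ : (Fin n → K) → ℝ) (I : Finset (Fin n)) (F : (↥I → K) → ℝ) :
    ∑ a, marginal μ I a * F a = ∑ x, μ x * F (subword I x) := by
  unfold marginal
  simp_rw [Finset.sum_mul, ite_mul, zero_mul]
  rw [Finset.sum_comm]
  refine Finset.sum_congr rfl fun x _ => ?_
  simp

def splice (I : Finset (Fin n)) (x : Fin n → K) (b : ↥I → K) : Fin n → K :=
  fun i => if h : i ∈ I then b ⟨i, h⟩ else x i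

lemma subword_splice (I : Finset (Fin n)) (x : Fin n → K) (b : ↥I → K) :
    subword I (splice I x b) = b := by
  funext i; simp [subword, splice, i.2]

lemma subword_compl_splice (I : Finset (Fin n)) (x : Fin n → K) (b : ↥I → K) :
    subword Iᶜ (splice I x b) = subword Iᶜ x := by
  funext i
  have hi : (i : Fin n) ∉ I := Finset.mem_compl.mp i.2
  simp [subword, splice, hi]

lemma splice_eq_self (I : Finset (Fin n)) (x y : Fin n → K)
    (h : subword Iᶜ y = subword Iᶜ x) : splice I x (subword I y) = y := by
  funext i
  by_cases hi : i ∈ I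
  · simp [splice, subword, hi]
  · have hic : i ∈ Iᶜ := Finset.mem_compl.mpr hi
    have h2 := congrFun h ⟨i, hic⟩
    simp only [subword] at h2
    simp [splice, hi, h2.symm]

lemma sum_compl_fiber (I : Finset (Fin n)) (x : Fin n → K) (f : (Fin n → K) → ℝ)
    (hf : ∀ y, y ≠ x → subword Iᶜ y ≠ subword Iᶜ x → f y = 0) :
    ∑ y ∈ Finset.univ.erase x, f y
      = ∑ b ∈ Finset.univ.erase (subword I x), f (splice I x b) := by
  classical
  rw [← Finset.sum_filter_of_ne
    (p := fun y => subword Iᶜ y = subword Iᶜ x)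
    (fun y hy hfy => by
      by_contra hc
      exact hfy (hf y (Finset.mem_erase.mp hy).1 hc))]
  refine Finset.sum_nbij' (fun y => subword I y) (fun b => splice I x b) ?_ ?_ ?_ ?_ ?_
  · intro y hy
    rw [Finset.mem_filter, Finset.mem_erase] at hy
    refine Finset.mem_erase.mpr ⟨?_, Finset.mem_univ _⟩
    intro he
    have he' : subword I y = subword I x := he
    have : splice I x (subword I y) = splice I x (subword I x) := by rw [he']
    rw [splice_eq_self I x y hy.2, splice_eq_self I x x rfl] at this
    exact hy.1.1 this
  · intro b hb
    rw [Finset.mem_erase] at hb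
    refine Finset.mem_filter.mpr ⟨Finset.mem_erase.mpr ⟨?_, Finset.mem_univ _⟩,
      subword_compl_splice I x b⟩
    intro he
    have he' : splice I x b = x := he
    exact hb.1 (by rw [← he', subword_splice])
  · intro y hy
    rw [Finset.mem_filter] at hy
    exact splice_eq_self I x y hy.2
  · intro b _
    exact subword_splice I x b
  · intro y hy
    rw [Finset.mem_filter] at hy
    rw [splice_eq_self I x y hy.2]

end Aux

/-- one recombination step does not increase the negative entropy:
`∑_x (μP)(x)·ln((μP)(x)) ≤ ∑_x μ(x)·ln(μ(x))` (with `0·ln 0 = 0`). -/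
theorem recombination_entropy_decreases
    {K : Type*} [Fintype K] [DecidableEq K] {n : ℕ}
    (I : Finset (Fin n))
    (φ : (↥I → K) → (↥I → K) → ℝ)
    (hφ_symm : ∀ a b, φ a b = φ b a)
    (hφ_nonneg : ∀ a b, 0 ≤ φ a b)
    (κdt : ℝ) (hκdt : 0 < κdt)
    (μ : (Fin n → K) → ℝ)
    (hμ_nonneg : ∀ x, 0 ≤ μ x)
    (hμ_sum : ∑ x, μ x = 1)
    (P : (Fin n → K) → (Fin n → K) → ℝ)
    (hP_off : ∀ x y, y ≠ x → subword Iᶜ y = subword Iᶜ x →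
      P x y = κdt * φ (subword I x) (subword I y) * marginal μ I (subword I y))
    (hP_zero : ∀ x y, y ≠ x → subword Iᶜ y ≠ subword Iᶜ x → P x y = 0)
    (hP_diag : ∀ x, P x x = 1 - ∑ y ∈ Finset.univ.erase x, P x y)
    (hP_diag_nonneg : ∀ x, 0 ≤ P x x) :
    ∑ x, (∑ y, μ y * P y x) * Real.log (∑ y, μ y * P y x) ≤
      ∑ x, μ x * Real.log (μ x) := by
  classical
  set ν : (Fin n → K) → ℝ := fun y => ∑ x, μ x * P x y with hν
  set mI : (↥I → K) → ℝ := marginal μ I with hmI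
  set mc : (↥(Iᶜ) → K) → ℝ := marginal μ Iᶜ with hmc
  set ρ : (Fin n → K) → ℝ := fun x => mI (subword I x) * mc (subword Iᶜ x) with hρ
  set L : (Fin n → K) → ℝ :=
    fun x => Real.log (mI (subword I x)) + Real.log (mc (subword Iᶜ x)) with hL
  show ∑ x, ν x * Real.log (ν x) ≤ ∑ x, μ x * Real.log (μ x)
  -- basic facts
  have hrow : ∀ x, ∑ y, P x y = 1 := by
    intro x
    rw [← Finset.add_sum_erase _ _ (Finset.mem_univ x), hP_diag x]
    ring
  have hPnn : ∀ x y, 0 ≤ P x y := by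
    intro x y
    by_cases hxy : y = x
    · subst hxy; exact hP_diag_nonneg y
    · by_cases hc : subword Iᶜ y = subword Iᶜ x
      · rw [hP_off x y hxy hc]
        exact mul_nonneg (mul_nonneg hκdt.le (hφ_nonneg _ _))
          (marginal_nonneg μ hμ_nonneg I (subword I y))
      · rw [hP_zero x y hxy hc]
  have hρnn : ∀ x, 0 ≤ ρ x := fun x =>
    mul_nonneg (marginal_nonneg μ hμ_nonneg I _) (marginal_nonneg μ hμ_nonneg Iᶜ _)
  have hνnn : ∀ y, 0 ≤ ν y := fun y =>
    Finset.sum_nonneg fun x _ => mul_nonneg (hμ_nonneg x) (hPnn x y)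
  have hν_ge : ∀ x y, μ x * P x y ≤ ν y := fun x y =>
    Finset.single_le_sum (f := fun z => μ z * P z y)
      (fun z _ => mul_nonneg (hμ_nonneg z) (hPnn z y)) (Finset.mem_univ x)
  have hνsum : ∑ y, ν y = 1 := by
    rw [hν]
    rw [Finset.sum_comm]
    simp_rw [← Finset.mul_sum]
    simp_rw [hrow, mul_one]
    exact hμ_sum
  have hρμ : ∀ x, 0 < μ x → 0 < ρ x := by
    intro x hx
    exact mul_pos (lt_of_lt_of_le hx (le_marginal μ hμ_nonneg I x))
      (lt_of_lt_of_le hx (le_marginal μ hμ_nonneg Iᶜ x))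
  -- reversibility w.r.t. ρ
  have hrev : ∀ x y, ρ x * P x y = ρ y * P y x := by
    intro x y
    by_cases hxy : y = x
    · subst hxy; rfl
    · by_cases hc : subword Iᶜ y = subword Iᶜ x
      · rw [hP_off x y hxy hc, hP_off y x (fun h => hxy h.symm) hc.symm, hρ]
        simp only
        rw [hc, hφ_symm (subword I x) (subword I y)]
        ring
      · rw [hP_zero x y hxy hc, hP_zero y x (fun h => hxy h.symm) (fun h => hc h.symm)]
        simp
  have hstat : ∀ y, ∑ x, ρ x * P x y = ρ y := by
    intro y
    rw [Finset.sum_congr rfl fun x _ => hrev x y, ← Finset.mul_sum, hrow, mul_one]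
  -- ρ y = 0 → ν y = 0
  have hzero : ∀ y, ρ y = 0 → ν y = 0 := by
    intro y h
    rw [hν]
    refine Finset.sum_eq_zero fun x _ => ?_
    have hcases := mul_eq_zero.mp h
    by_cases hxy : x = y
    · subst hxy
      have hμx : μ x = 0 := by
        rcases hcases with h1 | h1
        · exact le_antisymm (h1 ▸ le_marginal μ hμ_nonneg I x) (hμ_nonneg x)
        · exact le_antisymm (h1 ▸ le_marginal μ hμ_nonneg Iᶜ x) (hμ_nonneg x)
      rw [hμx, zero_mul]
    · by_cases hc : subword Iᶜ y = subword Iᶜ x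
      · rcases hcases with h1 | h1
        · have h1' : mI (subword I y) = 0 := h1
          rw [hP_off x y (fun h' => hxy h'.symm) hc, h1']
          ring
        · have hμx : μ x = 0 := by
            have h2 : marginal μ Iᶜ (subword Iᶜ x) = 0 := by rw [← hc]; exact h1
            exact le_antisymm (h2 ▸ le_marginal μ hμ_nonneg Iᶜ x) (hμ_nonneg x)
          rw [hμx, zero_mul]
      · rw [hP_zero x y (fun h' => hxy h'.symm) hc, mul_zero]
  -- restricted sums over the fiber
  have hC : ∀ (x : Fin n → K) (f : (↥I → K) → ℝ),
      ∑ y ∈ Finset.univ.erase x, P x y * f (subword I y)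
        = ∑ b ∈ Finset.univ.erase (subword I x),
            κdt * φ (subword I x) b * mI b * f b := by
    intro x f
    rw [sum_compl_fiber I x (fun y => P x y * f (subword I y))
      (fun y hyx hcy => by
        show P x y * f (subword I y) = 0
        rw [hP_zero x y hyx hcy, zero_mul])]
    refine Finset.sum_congr rfl fun b hb => ?_
    have hb' : b ≠ subword I x := (Finset.mem_erase.mp hb).1
    have h1 : splice I x b ≠ x := fun h => hb' (by rw [← subword_splice I x b, h])
    rw [hP_off x _ h1 (subword_compl_splice I x b), subword_splice]
  have hCer : ∀ x : Fin n → K,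
      ∑ y ∈ Finset.univ.erase x, P x y
        = ∑ b ∈ Finset.univ.erase (subword I x), κdt * φ (subword I x) b * mI b := by
    intro x
    have := hC x (fun _ => 1)
    simpa using this
  -- marginal preservation on I
  have hMI : ∀ g : (↥I → K) → ℝ,
      ∑ y, ν y * g (subword I y) = ∑ x, μ x * g (subword I x) := by
    intro g
    have h1 : ∑ y, ν y * g (subword I y)
        = ∑ x, μ x * ∑ y, P x y * g (subword I y) := by
      rw [hν]
      simp_rw [Finset.sum_mul]
      rw [Finset.sum_comm]
      simp_rw [Finset.mul_sum, mul_assoc]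
    rw [h1]
    have h2 : ∀ x, ∑ y, P x y * g (subword I y)
        = g (subword I x)
          + ∑ b ∈ Finset.univ.erase (subword I x),
              (κdt * φ (subword I x) b * mI b * g b
                - κdt * φ (subword I x) b * mI b * g (subword I x)) := by
      intro x
      rw [← Finset.add_sum_erase _ _ (Finset.mem_univ x), hC x g, hP_diag x, hCer x,
        Finset.sum_sub_distrib, ← Finset.sum_mul]
      ring
    simp_rw [h2, mul_add, Finset.sum_add_distrib]
    have h3 : ∑ x, μ x *
        ∑ b ∈ Finset.univ.erase (subword I x),
          (κdt * φ (subword I x) b * mI b * g b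
            - κdt * φ (subword I x) b * mI b * g (subword I x)) = 0 := by
      have h4 := sum_marginal_mul μ I (fun a =>
        ∑ b ∈ Finset.univ.erase a,
          (κdt * φ a b * mI b * g b - κdt * φ a b * mI b * g a))
      rw [← h4]
      have h5 : ∀ a : ↥I → K, marginal μ I a *
          ∑ b ∈ Finset.univ.erase a,
            (κdt * φ a b * mI b * g b - κdt * φ a b * mI b * g a)
          = ∑ b, (mI a * (κdt * φ a b * mI b) * g b
              - mI a * (κdt * φ a b * mI b) * g a) := by
        intro a
        rw [Finset.sum_erase (Finset.univ) (a := a) (by ring), Finset.mul_sum]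
        exact Finset.sum_congr rfl fun b _ => by rw [hmI]; ring
      simp_rw [h5, Finset.sum_sub_distrib]
      have h6 : ∑ a, ∑ b, mI a * (κdt * φ a b * mI b) * g b
          = ∑ a, ∑ b, mI a * (κdt * φ a b * mI b) * g a := by
        rw [Finset.sum_comm]
        exact Finset.sum_congr rfl fun a _ => Finset.sum_congr rfl fun b _ => by
          rw [hφ_symm b a]; ring
      rw [h6, sub_self]
    rw [h3, add_zero]
  -- marginal preservation on the complement
  have hMc : ∀ h : (↥(Iᶜ) → K) → ℝ,
      ∑ y, ν y * h (subword Iᶜ y) = ∑ x, μ x * h (subword Iᶜ x) := by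
    intro g
    have h1 : ∑ y, ν y * g (subword Iᶜ y)
        = ∑ x, μ x * ∑ y, P x y * g (subword Iᶜ y) := by
      rw [hν]
      simp_rw [Finset.sum_mul]
      rw [Finset.sum_comm]
      simp_rw [Finset.mul_sum, mul_assoc]
    rw [h1]
    refine Finset.sum_congr rfl fun x _ => ?_
    have h2 : ∑ y, P x y * g (subword Iᶜ y) = ∑ y, P x y * g (subword Iᶜ x) := by
      refine Finset.sum_congr rfl fun y _ => ?_
      by_cases hxy : y = x
      · subst hxy; rfl
      · by_cases hc : subword Iᶜ y = subword Iᶜ x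
        · rw [hc]
        · rw [hP_zero x y hxy hc, zero_mul, zero_mul]
    rw [h2, ← Finset.sum_mul, hrow, one_mul]
  have hB : ∑ y, ν y * L y = ∑ x, μ x * L x := by
    rw [hL]
    simp_rw [mul_add, Finset.sum_add_distrib]
    rw [hMI (fun a => Real.log (mI a)), hMc (fun c => Real.log (mc c))]
  -- termwise key inequality
  have key : ∀ x y, μ x * P x y * ((Real.log (ν y) - L y) - (Real.log (μ x) - L x))
      ≤ P x y * ρ x * (ν y / ρ y) - μ x * P x y := by
    intro x y
    by_cases hq : μ x * P x y = 0
    · rw [hq, zero_mul]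
      have : 0 ≤ P x y * ρ x * (ν y / ρ y) :=
        mul_nonneg (mul_nonneg (hPnn x y) (hρnn x)) (div_nonneg (hνnn y) (hρnn y))
      linarith
    · have hμx : 0 < μ x :=
        lt_of_le_of_ne (hμ_nonneg x) (Ne.symm (left_ne_zero_of_mul hq))
      have hPxy : 0 < P x y :=
        lt_of_le_of_ne (hPnn x y) (Ne.symm (right_ne_zero_of_mul hq))
      have hρx : 0 < ρ x := hρμ x hμx
      have hνy : 0 < ν y := lt_of_lt_of_le (mul_pos hμx hPxy) (hν_ge x y)
      have hρy : 0 < ρ y := by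
        by_cases hxy : y = x
        · subst hxy; exact hρx
        · by_cases hc : subword Iᶜ y = subword Iᶜ x
          · have hmcy : 0 < mc (subword Iᶜ y) := by
              rw [hmc, hc]
              exact lt_of_lt_of_le hμx (le_marginal μ hμ_nonneg Iᶜ x)
            have hmIy : 0 < mI (subword I y) := by
              rcases lt_or_eq_of_le (marginal_nonneg μ hμ_nonneg I (subword I y)) with h | h
              · exact h
              · exfalso
                have : P x y = 0 := by
                  rw [hP_off x y hxy hc, hmI, ← h]
                  ring
                exact hPxy.ne' this
            exact mul_pos hmIy hmcy
          · exact absurd (hP_zero x y hxy hc) hPxy.ne'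
      have hx' : 0 < mI (subword I x) * mc (subword Iᶜ x) := hρx
      have hy' : 0 < mI (subword I y) * mc (subword Iᶜ y) := hρy
      obtain ⟨hmIx, hmcx⟩ : 0 < mI (subword I x) ∧ 0 < mc (subword Iᶜ x) := by
        rcases mul_pos_iff.mp hx' with h | ⟨h1, _⟩
        · exact h
        · exact absurd h1 (not_lt.mpr (marginal_nonneg μ hμ_nonneg I _))
      obtain ⟨hmIy, hmcy'⟩ : 0 < mI (subword I y) ∧ 0 < mc (subword Iᶜ y) := by
        rcases mul_pos_iff.mp hy' with h | ⟨h1, _⟩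
        · exact h
        · exact absurd h1 (not_lt.mpr (marginal_nonneg μ hμ_nonneg I _))
      have hLx : L x = Real.log (ρ x) := (Real.log_mul hmIx.ne' hmcx.ne').symm
      have hLy : L y = Real.log (ρ y) := (Real.log_mul hmIy.ne' hmcy'.ne').symm
      have ht : 0 < ν y * ρ x / (μ x * ρ y) :=
        div_pos (mul_pos hνy hρx) (mul_pos hμx hρy)
      have hlog : (Real.log (ν y) - L y) - (Real.log (μ x) - L x)
          = Real.log (ν y * ρ x / (μ x * ρ y)) := by
        rw [hLx, hLy, Real.log_div (mul_pos hνy hρx).ne' (mul_pos hμx hρy).ne',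
          Real.log_mul hνy.ne' hρx.ne', Real.log_mul hμx.ne' hρy.ne']
        ring
      rw [hlog]
      have hstep : μ x * P x y * Real.log (ν y * ρ x / (μ x * ρ y))
          ≤ μ x * P x y * (ν y * ρ x / (μ x * ρ y) - 1) :=
        mul_le_mul_of_nonneg_left (Real.log_le_sub_one_of_pos ht)
          (le_of_lt (mul_pos hμx hPxy))
      have heq : μ x * P x y * (ν y * ρ x / (μ x * ρ y) - 1)
          = P x y * ρ x * (ν y / ρ y) - μ x * P x y := by
        have h1 := hμx.ne'
        have h2 := hρy.ne'
        field_simp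
      linarith
  -- assemble the inequality
  have hA : (∑ y, ν y * (Real.log (ν y) - L y)) - (∑ x, μ x * (Real.log (μ x) - L x))
      ≤ 0 := by
    have e1 : ∑ y, ν y * (Real.log (ν y) - L y)
        = ∑ x, ∑ y, μ x * P x y * (Real.log (ν y) - L y) := by
      rw [hν]
      simp_rw [Finset.sum_mul]
      rw [Finset.sum_comm]
    have e2 : ∑ x, μ x * (Real.log (μ x) - L x)
        = ∑ x, ∑ y, μ x * P x y * (Real.log (μ x) - L x) := by
      refine Finset.sum_congr rfl fun x _ => ?_
      rw [show ∀ c : ℝ, ∑ y, μ x * P x y * c = (∑ y, P x y) * (μ x * c) from fun c => by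
        rw [Finset.sum_mul]; exact Finset.sum_congr rfl fun y _ => by ring]
      rw [hrow, one_mul]
    rw [e1, e2, ← Finset.sum_sub_distrib]
    simp_rw [← Finset.sum_sub_distrib, ← mul_sub]
    have hle : ∑ x, ∑ y, μ x * P x y
          * ((Real.log (ν y) - L y) - (Real.log (μ x) - L x))
        ≤ ∑ x, ∑ y, (P x y * ρ x * (ν y / ρ y) - μ x * P x y) :=
      Finset.sum_le_sum fun x _ => Finset.sum_le_sum fun y _ => key x y
    refine le_trans hle (le_of_eq ?_)
    simp_rw [Finset.sum_sub_distrib]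
    have hU1 : ∑ x, ∑ y, P x y * ρ x * (ν y / ρ y) = 1 := by
      rw [Finset.sum_comm]
      have : ∀ y, ∑ x, P x y * ρ x * (ν y / ρ y) = ν y := by
        intro y
        rw [show ∑ x, P x y * ρ x * (ν y / ρ y)
            = (∑ x, ρ x * P x y) * (ν y / ρ y) from by
          rw [Finset.sum_mul]; exact Finset.sum_congr rfl fun x _ => by ring]
        rw [hstat y]
        by_cases h : ρ y = 0
        · rw [h, hzero y h]
          simp
        · rw [mul_div_assoc']
          rw [mul_comm (ρ y) (ν y), mul_div_assoc, div_self h, mul_one]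
      simp_rw [this]
      exact hνsum
    have hU2 : ∑ x : Fin n → K, ∑ y : Fin n → K, μ x * P x y = 1 := by
      simp_rw [← Finset.mul_sum, hrow, mul_one]
      exact hμ_sum
    rw [hU1, hU2, sub_self]
  -- conclude
  have expand1 : ∑ y, ν y * (Real.log (ν y) - L y)
      = ∑ y, ν y * Real.log (ν y) - ∑ y, ν y * L y := by
    simp_rw [mul_sub, Finset.sum_sub_distrib]
  have expand2 : ∑ x, μ x * (Real.log (μ x) - L x)
      = ∑ x, μ x * Real.log (μ x) - ∑ x, μ x * L x := by
    simp_rw [mul_sub, Finset.sum_sub_distrib]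
  rw [expand1, expand2] at hA
  linarith
end

section
/- Fix a finite alphabet K, genome length n, X = (Fin n → K), for each i ∈ Fin n an infinitesimal matrix A_i = (α_i(a,b)) on K with strictly positive stationary distribution q_i (q_i(a) > 0, ∑_a q_i(a)·α_i(a,b) = 0), a constant κ ≥ 0, and for each subset I ⊆ Fin n a symmetric nonnegative similarity function φ on pairs of I-substrings (φ(a,b) = φ(b,a) ≥ 0). Then the product distribution q_Λ(x) = ∏_i q_i(x_i) is a fixed point of the mutation–recombination equation: the right-hand side ∑_i ∑_{y_i∈K} ( α_i(y_i,x_i)·μ(x_{Λ∖i}, y_i) − α_i(x_i,y_i)·μ(x) ) + κ·∑_{I⊆Λ} ∑_{y_I} ( φ(y_I,x_I)·μ_I(x_I)·μ(x_{Λ∖I}, y_I) − φ(x_I,y_I)·μ_I(y_I)·μ(x) ) vanishes identically in x when μ = q_Λ. -/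
/-- `(x_{Λ∖I}, a)`: the genome obtained from `x` by replacing its restriction to `I`
with `a`. -/
def substGenome {K : Type*} {n : ℕ} (I : Finset (Fin n)) (x : Fin n → K) (a : ↥I → K) :
    Fin n → K :=
  fun j => if h : j ∈ I then a ⟨j, h⟩ else x j

/-- The right-hand side of the mutation–recombination equation. -/
def mutRecRHS {K : Type*} [Fintype K] [DecidableEq K] {n : ℕ}
    (α : Fin n → K → K → ℝ) (κ : ℝ)
    (φ : (I : Finset (Fin n)) → (↥I → K) → (↥I → K) → ℝ)
    (μ : (Fin n → K) → ℝ) (x : Fin n → K) : ℝ :=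
  (∑ i : Fin n, ∑ b : K,
      (α i b (x i) * μ (Function.update x i b) - α i (x i) b * μ x))
  + κ * ∑ I : Finset (Fin n), ∑ a : ↥I → K,
      (φ I a (subword I x) * marginal μ I (subword I x) * μ (substGenome I x a)
        - φ I (subword I x) a * marginal μ I a * μ x)

/-- A dite-product over all of `Fin n` restricts to a product over the subtype `↥I`. -/
lemma prod_dite_subtype {K : Type*} {n : ℕ} (q : Fin n → K → ℝ)
    (I : Finset (Fin n)) (a : ↥I → K) :
    (∏ j : Fin n, if h : j ∈ I then q j (a ⟨j, h⟩) else 1) = ∏ i : ↥I, q i.1 (a i) := by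
  classical
  rw [← Finset.prod_subset (Finset.subset_univ I) (fun j _ hj => dif_neg hj)]
  rw [← Finset.prod_attach I (fun j => if h : j ∈ I then q j (a ⟨j, h⟩) else 1)]
  rw [Finset.univ_eq_attach]
  refine Finset.prod_congr rfl fun i _ => ?_
  rw [dif_pos i.2]

/-- The marginal of the product measure. -/
lemma marginal_prod {K : Type*} [Fintype K] [DecidableEq K] {n : ℕ}
    (q : Fin n → K → ℝ) (hq_sum : ∀ i, ∑ a, q i a = 1)
    (I : Finset (Fin n)) (a : ↥I → K) :
    marginal (fun z => ∏ i, q i (z i)) I a = ∏ i : ↥I, q i.1 (a i) := by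
  classical
  have h1 : marginal (fun z => ∏ i, q i (z i)) I a
      = ∑ x : Fin n → K, ∏ j, (if h : j ∈ I then (if x j = a ⟨j, h⟩ then q j (x j) else 0)
          else q j (x j)) := by
    unfold marginal
    refine Finset.sum_congr rfl fun x _ => ?_
    by_cases hx : subword I x = a
    · rw [if_pos hx]
      refine Finset.prod_congr rfl fun j _ => ?_
      by_cases hj : j ∈ I
      · rw [dif_pos hj, if_pos (show x j = a ⟨j, hj⟩ from congrFun hx ⟨j, hj⟩)]
      · rw [dif_neg hj]
    · rw [if_neg hx]
      have : ∃ i : ↥I, x i.1 ≠ a i := by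
        by_contra hc
        push_neg at hc
        exact hx (funext fun i => hc i)
      obtain ⟨i, hi⟩ := this
      refine (Finset.prod_eq_zero (Finset.mem_univ i.1) ?_).symm
      rw [dif_pos i.2, if_neg]
      simpa using hi
  have h2 : (∑ x : Fin n → K, ∏ j, (if h : j ∈ I then
        (if x j = a ⟨j, h⟩ then q j (x j) else 0) else q j (x j)))
      = ∏ j : Fin n, ∑ k : K, (if h : j ∈ I then (if k = a ⟨j, h⟩ then q j k else 0)
          else q j k) := by
    rw [Finset.prod_univ_sum (fun _ => Finset.univ)]
    rw [Fintype.piFinset_univ]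
  have h3 : ∀ j : Fin n, (∑ k : K, (if h : j ∈ I then (if k = a ⟨j, h⟩ then q j k else 0)
      else q j k)) = if h : j ∈ I then q j (a ⟨j, h⟩) else 1 := by
    intro j
    by_cases hj : j ∈ I
    · simp only [dif_pos hj]
      simp
    · simp only [dif_neg hj]
      exact hq_sum j
  rw [h1, h2, Finset.prod_congr rfl (fun j _ => h3 j), prod_dite_subtype]

/-- Product measure of a substituted genome. -/
lemma prod_substGenome {K : Type*} {n : ℕ} (q : Fin n → K → ℝ)
    (I : Finset (Fin n)) (x : Fin n → K) (a : ↥I → K) :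
    (∏ j, q j (substGenome I x a j))
      = (∏ i : ↥I, q i.1 (a i)) * ∏ j ∈ Iᶜ, q j (x j) := by
  classical
  rw [← Finset.prod_mul_prod_compl I (fun j => q j (substGenome I x a j))]
  congr 1
  · rw [← Finset.prod_attach I (fun j => q j (substGenome I x a j)), Finset.univ_eq_attach]
    refine Finset.prod_congr rfl fun i _ => ?_
    simp [substGenome, i.2]
  · refine Finset.prod_congr rfl fun j hj => ?_
    rw [Finset.mem_compl] at hj
    simp [substGenome, hj]

/-- Splitting the full product at `I`. -/
lemma prod_split {K : Type*} {n : ℕ} (q : Fin n → K → ℝ)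
    (I : Finset (Fin n)) (x : Fin n → K) :
    (∏ j, q j (x j)) = (∏ i : ↥I, q i.1 (x i.1)) * ∏ j ∈ Iᶜ, q j (x j) := by
  classical
  rw [← Finset.prod_mul_prod_compl I (fun j => q j (x j))]
  congr 1
  rw [← Finset.prod_attach I (fun j => q j (x j)), Finset.univ_eq_attach]

/-- the product distribution `q_Λ(x) = ∏_i q_i(x_i)` is a fixed point of the
mutation–recombination equation. -/
theorem product_distribution_is_fixed_point
    {K : Type*} [Fintype K] [DecidableEq K] {n : ℕ}
    (α : Fin n → K → K → ℝ)
    (hα_off : ∀ i : Fin n, ∀ a b : K, a ≠ b → 0 ≤ α i a b)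
    (hα_diag : ∀ i : Fin n, ∀ a : K, α i a a = -∑ b ∈ Finset.univ.erase a, α i a b)
    (q : Fin n → K → ℝ)
    (hq_pos : ∀ i a, 0 < q i a)
    (hq_sum : ∀ i, ∑ a, q i a = 1)
    (hq_stat : ∀ i : Fin n, ∀ b : K, ∑ a, q i a * α i a b = 0)
    (κ : ℝ) (hκ : 0 ≤ κ)
    (φ : (I : Finset (Fin n)) → (↥I → K) → (↥I → K) → ℝ)
    (hφ_symm : ∀ I a b, φ I a b = φ I b a)
    (hφ_nonneg : ∀ I a b, 0 ≤ φ I a b) :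
    ∀ x : Fin n → K, mutRecRHS α κ φ (fun z => ∏ i, q i (z i)) x = 0 := by
  classical
  intro x
  unfold mutRecRHS
  have hrow : ∀ i : Fin n, ∀ a : K, ∑ b : K, α i a b = 0 := by
    intro i a
    rw [← Finset.add_sum_erase Finset.univ _ (Finset.mem_univ a), hα_diag i a]
    ring
  have hmut : (∑ i : Fin n, ∑ b : K,
      (α i b (x i) * (fun z => ∏ j, q j (z j)) (Function.update x i b)
        - α i (x i) b * (fun z => ∏ j, q j (z j)) x)) = 0 := by
    refine Finset.sum_eq_zero fun i _ => ?_
    have hupd : ∀ b : K, (∏ j, q j (Function.update x i b j))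
        = q i b * ∏ j ∈ Finset.univ.erase i, q j (x j) := by
      intro b
      rw [← Finset.mul_prod_erase Finset.univ (fun j => q j (Function.update x i b j))
        (Finset.mem_univ i)]
      congr 1
      · rw [Function.update_self]
      · refine Finset.prod_congr rfl fun j hj => ?_
        rw [Function.update_of_ne (Finset.ne_of_mem_erase hj)]
    have hx : (∏ j, q j (x j)) = q i (x i) * ∏ j ∈ Finset.univ.erase i, q j (x j) :=
      Finset.mul_prod_erase Finset.univ (fun j => q j (x j)) (Finset.mem_univ i) |>.symm
    simp only [hupd, hx]
    rw [Finset.sum_sub_distrib]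
    have e1 : (∑ b : K, α i b (x i) * (q i b * ∏ j ∈ Finset.univ.erase i, q j (x j)))
        = (∑ b : K, q i b * α i b (x i)) * ∏ j ∈ Finset.univ.erase i, q j (x j) := by
      rw [Finset.sum_mul]; exact Finset.sum_congr rfl fun b _ => by ring
    have e2 : (∑ b : K, α i (x i) b * (q i (x i) * ∏ j ∈ Finset.univ.erase i, q j (x j)))
        = (∑ b : K, α i (x i) b) * (q i (x i) * ∏ j ∈ Finset.univ.erase i, q j (x j)) := by
      rw [Finset.sum_mul]
    rw [e1, e2, hq_stat i (x i), hrow i (x i)]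
    ring
  have hrec : (∑ I : Finset (Fin n), ∑ a : ↥I → K,
      (φ I a (subword I x) * marginal (fun z => ∏ j, q j (z j)) I (subword I x)
          * (fun z => ∏ j, q j (z j)) (substGenome I x a)
        - φ I (subword I x) a * marginal (fun z => ∏ j, q j (z j)) I a
          * (fun z => ∏ j, q j (z j)) x)) = 0 := by
    refine Finset.sum_eq_zero fun I _ => Finset.sum_eq_zero fun a _ => ?_
    simp only
    rw [marginal_prod q hq_sum, marginal_prod q hq_sum, prod_substGenome,
      prod_split q I x, hφ_symm I a (subword I x)]
    have : ∀ i : ↥I, subword I x i = x i.1 := fun i => rfl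
    simp only [subword]
    ring
  rw [hmut, hrec, mul_zero, add_zero]
end

section
/- Fix a finite alphabet K, genome length n, X = (Fin n → K); for each i ∈ Fin n let A_i = (α_i(a,b)) be a connected infinitesimal matrix on K (irreducible: any letter reachable from any other through transitions of positive intensity) with strictly positive stationary distribution q_i; fix κ ≥ 0 and for each I ⊆ Fin n a symmetric nonnegative similarity function φ on pairs of I-substrings. Let μ : ℝ → (X → ℝ) be a differentiable family of strictly positive probability measures solving dμ(x)/dt = ∑_i ∑_{y_i} ( α_i(y_i,x_i)·μ(x_{Λ∖i}, y_i) − α_i(x_i,y_i)·μ(x) ) + κ·∑_{I⊆Λ} ∑_{y_I} ( φ(y_I,x_I)·μ_I(x_I)·μ(x_{Λ∖I}, y_I) − φ(x_I,y_I)·μ_I(y_I)·μ(x) ). Then at every time t with μ(t) ≠ q_Λ, where q_Λ(x) = ∏_i q_i(x_i), the relative entropy D(μ(t)|q_Λ) = ∑_x μ(t)(x)·ln(μ(t)(x)/q_Λ(x)) has strictly negative time derivative. -/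
section lemmas
set_option linter.unusedSectionVars false
variable {K : Type*} [Fintype K] [DecidableEq K] {n : ℕ}

lemma subword_substGenome (I : Finset (Fin n)) (x : Fin n → K) (a : ↥I → K) :
    subword I (substGenome I x a) = a := by
  funext j; simp [subword, substGenome, j.2]

lemma substGenome_substGenome (I : Finset (Fin n)) (x : Fin n → K) (a b : ↥I → K) :
    substGenome I (substGenome I x a) b = substGenome I x b := by
  funext j; unfold substGenome; by_cases h : j ∈ I <;> simp [h]

lemma substGenome_subword (I : Finset (Fin n)) (x : Fin n → K) :
    substGenome I x (subword I x) = x := by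
  funext j; unfold substGenome subword; by_cases h : j ∈ I <;> simp [h]

lemma sum_invol (I : Finset (Fin n)) (f : (Fin n → K) → (↥I → K) → ℝ) :
    ∑ x, ∑ a, f x a = ∑ x, ∑ a, f (substGenome I x a) (subword I x) := by
  have hinv : Function.Involutive
      (fun p : (Fin n → K) × (↥I → K) => (substGenome I p.1 p.2, subword I p.1)) := by
    rintro ⟨x, a⟩
    simp [subword_substGenome, substGenome_substGenome, substGenome_subword]
  calc ∑ x, ∑ a, f x a = ∑ p : (Fin n → K) × (↥I → K), f p.1 p.2 :=
        (Fintype.sum_prod_type' f).symm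
    _ = ∑ p : (Fin n → K) × (↥I → K), f (substGenome I p.1 p.2) (subword I p.1) := by
        rw [← Equiv.sum_comp hinv.toPerm (fun p : (Fin n → K) × (↥I → K) => f p.1 p.2)]
        simp [Function.Involutive.coe_toPerm]
    _ = ∑ x, ∑ a, f (substGenome I x a) (subword I x) :=
        Fintype.sum_prod_type' (fun x a => f (substGenome I x a) (subword I x))

lemma sum_invol_upd (i : Fin n) (f : (Fin n → K) → K → ℝ) :
    ∑ x, ∑ b, f x b = ∑ x, ∑ b, f (Function.update x i b) (x i) := by
  have hinv : Function.Involutive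
      (fun p : (Fin n → K) × K => (Function.update p.1 i p.2, p.1 i)) := by
    rintro ⟨x, b⟩
    simp [Function.update_idem]
  calc ∑ x, ∑ b, f x b = ∑ p : (Fin n → K) × K, f p.1 p.2 :=
        (Fintype.sum_prod_type' f).symm
    _ = ∑ p : (Fin n → K) × K, f (Function.update p.1 i p.2) (p.1 i) := by
        rw [← Equiv.sum_comp hinv.toPerm (fun p : (Fin n → K) × K => f p.1 p.2)]
        simp [Function.Involutive.coe_toPerm]
    _ = _ := Fintype.sum_prod_type' (fun x b => f (Function.update x i b) (x i))

lemma sum_subword_mul (I : Finset (Fin n)) (F : (↥I → K) → ℝ) (p : (Fin n → K) → ℝ) :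
    ∑ x, F (subword I x) * p x = ∑ a, F a * marginal p I a := by
  unfold marginal
  simp_rw [Finset.mul_sum, mul_ite, mul_zero]
  rw [Finset.sum_comm]
  congr 1
  funext x
  simp [Finset.sum_ite_eq]

lemma marginal_pos_s10 (I : Finset (Fin n)) (p : (Fin n → K) → ℝ) (hp : ∀ x, 0 < p x)
    (hX : Nonempty (Fin n → K)) (a : ↥I → K) : 0 < marginal p I a := by
  obtain ⟨y⟩ := hX
  unfold marginal
  apply Finset.sum_pos'
  · intro x _; split <;> [exact (hp x).le; rfl]
  · exact ⟨substGenome I y a, Finset.mem_univ _, by simp [subword_substGenome, hp]⟩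

open Finset in
lemma prod_q_update (q : Fin n → K → ℝ) (x : Fin n → K) (i : Fin n) (b : K) :
    (∏ j, q j (Function.update x i b j)) * q i (x i) = (∏ j, q j (x j)) * q i b := by
  have h1 : ∀ y : Fin n → K, ∏ j, q j (y j) = q i (y i) * ∏ j ∈ univ.erase i, q j (y j) :=
    fun y => (Finset.mul_prod_erase univ _ (mem_univ i)).symm
  have h2 : ∏ j ∈ univ.erase i, q j (Function.update x i b j)
      = ∏ j ∈ univ.erase i, q j (x j) := by
    apply Finset.prod_congr rfl
    intro j hj
    rw [Function.update_of_ne (Finset.ne_of_mem_erase hj)]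
  rw [h1, h1 (fun j => x j), h2, Function.update_self]
  ring

open Finset in
lemma prod_q_subst (q : Fin n → K → ℝ) (I : Finset (Fin n)) (x : Fin n → K) (a : ↥I → K) :
    (∏ j, q j (substGenome I x a j)) * (∏ j : ↥I, q j.1 (subword I x j))
      = (∏ j, q j (x j)) * (∏ j : ↥I, q j.1 (a j)) := by
  have split : ∀ y : Fin n → K,
      ∏ j, q j (y j) = (∏ j ∈ I, q j (y j)) * ∏ j ∈ Iᶜ, q j (y j) :=
    fun y => (Finset.prod_mul_prod_compl I _).symm
  have hcoe : ∀ y : Fin n → K, ∏ j ∈ I, q j (y j) = ∏ j : ↥I, q j.1 (y j.1) :=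
    fun y => (Finset.prod_coe_sort I (fun j => q j (y j))).symm
  have hIa : ∏ j : ↥I, q j.1 (substGenome I x a j.1) = ∏ j : ↥I, q j.1 (a j) := by
    apply Finset.prod_congr rfl
    intro j _
    simp [substGenome, j.2]
  have hIc : ∏ j ∈ Iᶜ, q j (substGenome I x a j) = ∏ j ∈ Iᶜ, q j (x j) := by
    apply Finset.prod_congr rfl
    intro j hj
    simp [substGenome, (Finset.mem_compl.mp hj)]
  have hsub : ∀ j : ↥I, subword I x j = x j.1 := fun j => rfl
  rw [split, split (fun j => x j), hcoe, hcoe, hIa, hIc]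
  simp only [hsub]
  ring

end lemmas

section mass
set_option linter.unusedSectionVars false
variable {K : Type*} [Fintype K] [DecidableEq K] {n : ℕ}

lemma sum_mutRecRHS (α : Fin n → K → K → ℝ) (κ : ℝ)
    (φ : (I : Finset (Fin n)) → (↥I → K) → (↥I → K) → ℝ)
    (p : (Fin n → K) → ℝ) :
    ∑ x, mutRecRHS α κ φ p x = 0 := by
  unfold mutRecRHS
  rw [Finset.sum_add_distrib]
  have h1 : ∑ x : Fin n → K, ∑ i : Fin n, ∑ b : K,
      (α i b (x i) * p (Function.update x i b) - α i (x i) b * p x) = 0 := by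
    rw [Finset.sum_comm]
    apply Finset.sum_eq_zero
    intro i _
    simp_rw [Finset.sum_sub_distrib]
    apply sub_eq_zero_of_eq
    simpa using sum_invol_upd i (fun x b => α i b (x i) * p (Function.update x i b))
  have h2 : ∑ x : Fin n → K, ∑ I : Finset (Fin n), ∑ a : ↥I → K,
      (φ I a (subword I x) * marginal p I (subword I x) * p (substGenome I x a)
        - φ I (subword I x) a * marginal p I a * p x) = 0 := by
    rw [Finset.sum_comm]
    apply Finset.sum_eq_zero
    intro I _
    simp_rw [Finset.sum_sub_distrib]
    apply sub_eq_zero_of_eq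
    simpa [subword_substGenome, substGenome_substGenome, substGenome_subword]
      using sum_invol I (fun x a =>
        φ I a (subword I x) * marginal p I (subword I x) * p (substGenome I x a))
  rw [h1, ← Finset.mul_sum, h2]
  ring
end mass

section M
variable {K : Type*} [Fintype K] [DecidableEq K] {n : ℕ}


variable (α : Fin n → K → K → ℝ) (q : Fin n → K → ℝ) (p : (Fin n → K) → ℝ)

lemma mut_eq (i : Fin n) :
    ∑ x, ∑ b, (α i b (x i) * p (Function.update x i b) - α i (x i) b * p x)
        * Real.log (p x / ∏ j, q j (x j))
    = ∑ x, ∑ b, α i (x i) b * (p x *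
        (Real.log (p (Function.update x i b) / ∏ j, q j (Function.update x i b j))
          - Real.log (p x / ∏ j, q j (x j)))) := by
  have h := sum_invol_upd i (fun x b => α i b (x i) * p (Function.update x i b)
      * Real.log (p x / ∏ j, q j (x j)))
  simp only [Function.update_self, Function.update_idem, Function.update_eq_self] at h
  simp_rw [sub_mul, Finset.sum_sub_distrib]
  rw [h, ← Finset.sum_sub_distrib]
  congr 1; funext x; rw [← Finset.sum_sub_distrib]; congr 1; funext b; ring

lemma mut_H_zero (i : Fin n)
    (hα_diag : ∀ a : K, α i a a = -∑ b ∈ Finset.univ.erase a, α i a b)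
    (hq_stat : ∀ b : K, ∑ a, q i a * α i a b = 0)
    (hq_pos : ∀ j a, 0 < q j a) :
    ∑ x, ∑ b, α i (x i) b * (p (Function.update x i b) * (∏ j, q j (x j))
        / (∏ j, q j (Function.update x i b j)) - p x) = 0 := by
  have hQpos : ∀ y : Fin n → K, 0 < ∏ j, q j (y j) :=
    fun y => Finset.prod_pos fun j _ => hq_pos j (y j)
  have hrow : ∀ a : K, ∑ b, α i a b = 0 := by
    intro a
    rw [← Finset.add_sum_erase _ _ (Finset.mem_univ a), hα_diag a]
    ring
  simp_rw [mul_sub, Finset.sum_sub_distrib]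
  have hT2 : ∑ x : Fin n → K, ∑ b, α i (x i) b * p x = 0 := by
    apply Finset.sum_eq_zero
    intro x _
    rw [← Finset.sum_mul, hrow, zero_mul]
  have hT1 : ∑ x : Fin n → K, ∑ b, α i (x i) b * (p (Function.update x i b)
      * (∏ j, q j (x j)) / (∏ j, q j (Function.update x i b j))) = 0 := by
    have h := sum_invol_upd i (fun x b => α i (x i) b * (p (Function.update x i b)
        * (∏ j, q j (x j)) / (∏ j, q j (Function.update x i b j))))
    simp only [Function.update_self, Function.update_idem, Function.update_eq_self] at h
    rw [h]
    apply Finset.sum_eq_zero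
    intro x _
    have hcalc : ∀ b : K, α i b (x i) * (p x * (∏ j, q j (Function.update x i b j))
        / (∏ j, q j (x j)))
        = (p x / q i (x i)) * (q i b * α i b (x i)) := by
      intro b
      have hq := prod_q_update q x i b
      have h1 : (∏ j, q j (x j)) ≠ 0 := (hQpos x).ne'
      have h2 : q i (x i) ≠ 0 := (hq_pos i (x i)).ne'
      field_simp
      linear_combination (α i b (x i) * p x) * hq
    simp_rw [hcalc]
    rw [← Finset.mul_sum, hq_stat (x i), mul_zero]
  rw [hT1, hT2, sub_zero]

lemma mut_pt_le (i : Fin n) (x : Fin n → K) (b : K)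
    (hα_off : ∀ a b : K, a ≠ b → 0 ≤ α i a b)
    (hq_pos : ∀ j a, 0 < q j a) (hp_pos : ∀ y, 0 < p y) :
    α i (x i) b * (p x *
        (Real.log (p (Function.update x i b) / ∏ j, q j (Function.update x i b j))
          - Real.log (p x / ∏ j, q j (x j))))
    ≤ α i (x i) b * (p (Function.update x i b) * (∏ j, q j (x j))
        / (∏ j, q j (Function.update x i b j)) - p x) := by
  have hQpos : ∀ y : Fin n → K, 0 < ∏ j, q j (y j) :=
    fun y => Finset.prod_pos fun j _ => hq_pos j (y j)
  by_cases hb : b = x i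
  · subst hb
    rw [Function.update_eq_self]
    rw [sub_self, mul_zero, mul_zero, mul_div_assoc, div_self (hQpos x).ne', mul_one,
      sub_self, mul_zero]
  · have hα : 0 ≤ α i (x i) b := hα_off (x i) b (fun h => hb h.symm)
    set y := Function.update x i b with hy
    have hz : (0:ℝ) < p y * (∏ j, q j (x j)) / ((∏ j, q j (y j)) * p x) :=
      div_pos (mul_pos (hp_pos y) (hQpos x)) (mul_pos (hQpos y) (hp_pos x))
    have hlog : Real.log (p y / ∏ j, q j (y j)) - Real.log (p x / ∏ j, q j (x j))
        = Real.log (p y * (∏ j, q j (x j)) / ((∏ j, q j (y j)) * p x)) := by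
      rw [Real.log_div (hp_pos y).ne' (hQpos y).ne', Real.log_div (hp_pos x).ne' (hQpos x).ne',
        Real.log_div (mul_pos (hp_pos y) (hQpos x)).ne' (mul_pos (hQpos y) (hp_pos x)).ne',
        Real.log_mul (hp_pos y).ne' (hQpos x).ne', Real.log_mul (hQpos y).ne' (hp_pos x).ne']
      ring
    rw [hlog]
    apply mul_le_mul_of_nonneg_left _ hα
    have hle := Real.log_le_sub_one_of_pos hz
    have := mul_le_mul_of_nonneg_left hle (hp_pos x).le
    calc p x * Real.log (p y * (∏ j, q j (x j)) / ((∏ j, q j (y j)) * p x))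
        ≤ p x * (p y * (∏ j, q j (x j)) / ((∏ j, q j (y j)) * p x) - 1) := this
      _ = p y * (∏ j, q j (x j)) / (∏ j, q j (y j)) - p x := by
          have h1 : (∏ j, q j (y j)) ≠ 0 := (hQpos y).ne'
          have h2 : p x ≠ 0 := (hp_pos x).ne'
          field_simp

lemma mut_pt_lt (i : Fin n) (x : Fin n → K) (b : K)
    (hq_pos : ∀ j a, 0 < q j a) (hp_pos : ∀ y, 0 < p y)
    (hα : 0 < α i (x i) b)
    (hne : p (Function.update x i b) * (∏ j, q j (x j))
        ≠ p x * (∏ j, q j (Function.update x i b j))) :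
    α i (x i) b * (p x *
        (Real.log (p (Function.update x i b) / ∏ j, q j (Function.update x i b j))
          - Real.log (p x / ∏ j, q j (x j))))
    < α i (x i) b * (p (Function.update x i b) * (∏ j, q j (x j))
        / (∏ j, q j (Function.update x i b j)) - p x) := by
  have hQpos : ∀ y : Fin n → K, 0 < ∏ j, q j (y j) :=
    fun y => Finset.prod_pos fun j _ => hq_pos j (y j)
  set y := Function.update x i b with hy
  have hz : (0:ℝ) < p y * (∏ j, q j (x j)) / ((∏ j, q j (y j)) * p x) :=
    div_pos (mul_pos (hp_pos y) (hQpos x)) (mul_pos (hQpos y) (hp_pos x))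
  have hz1 : p y * (∏ j, q j (x j)) / ((∏ j, q j (y j)) * p x) ≠ 1 := by
    intro h
    apply hne
    have h1 : (∏ j, q j (y j)) ≠ 0 := (hQpos y).ne'
    have h2 : p x ≠ 0 := (hp_pos x).ne'
    rw [div_eq_one_iff_eq (mul_ne_zero h1 h2)] at h
    linear_combination h
  have hlog : Real.log (p y / ∏ j, q j (y j)) - Real.log (p x / ∏ j, q j (x j))
      = Real.log (p y * (∏ j, q j (x j)) / ((∏ j, q j (y j)) * p x)) := by
    rw [Real.log_div (hp_pos y).ne' (hQpos y).ne', Real.log_div (hp_pos x).ne' (hQpos x).ne',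
      Real.log_div (mul_pos (hp_pos y) (hQpos x)).ne' (mul_pos (hQpos y) (hp_pos x)).ne',
      Real.log_mul (hp_pos y).ne' (hQpos x).ne', Real.log_mul (hQpos y).ne' (hp_pos x).ne']
    ring
  rw [hlog]
  apply mul_lt_mul_of_pos_left _ hα
  have hlt := Real.log_lt_sub_one_of_pos hz hz1
  have := mul_lt_mul_of_pos_left hlt (hp_pos x)
  calc p x * Real.log (p y * (∏ j, q j (x j)) / ((∏ j, q j (y j)) * p x))
      < p x * (p y * (∏ j, q j (x j)) / ((∏ j, q j (y j)) * p x) - 1) := this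
    _ = p y * (∏ j, q j (x j)) / (∏ j, q j (y j)) - p x := by
        have h1 : (∏ j, q j (y j)) ≠ 0 := (hQpos y).ne'
        have h2 : p x ≠ 0 := (hp_pos x).ne'
        field_simp
end M

section M2
variable {K : Type*} [Fintype K] [DecidableEq K] {n : ℕ}
variable (α : Fin n → K → K → ℝ) (q : Fin n → K → ℝ) (p : (Fin n → K) → ℝ)

lemma mut_nonpos (i : Fin n)
    (hα_off : ∀ a b : K, a ≠ b → 0 ≤ α i a b)
    (hα_diag : ∀ a : K, α i a a = -∑ b ∈ Finset.univ.erase a, α i a b)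
    (hq_stat : ∀ b : K, ∑ a, q i a * α i a b = 0)
    (hq_pos : ∀ j a, 0 < q j a) (hp_pos : ∀ y, 0 < p y) :
    ∑ x, ∑ b, (α i b (x i) * p (Function.update x i b) - α i (x i) b * p x)
        * Real.log (p x / ∏ j, q j (x j)) ≤ 0 := by
  rw [mut_eq α q p i]
  calc ∑ x, ∑ b, α i (x i) b * (p x *
        (Real.log (p (Function.update x i b) / ∏ j, q j (Function.update x i b j))
          - Real.log (p x / ∏ j, q j (x j))))
      ≤ ∑ x, ∑ b, α i (x i) b * (p (Function.update x i b) * (∏ j, q j (x j))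
        / (∏ j, q j (Function.update x i b j)) - p x) :=
        Finset.sum_le_sum fun x _ => Finset.sum_le_sum fun b _ =>
          mut_pt_le α q p i x b hα_off hq_pos hp_pos
    _ = 0 := mut_H_zero α q p i hα_diag hq_stat hq_pos

lemma mut_neg (i : Fin n)
    (hα_off : ∀ a b : K, a ≠ b → 0 ≤ α i a b)
    (hα_diag : ∀ a : K, α i a a = -∑ b ∈ Finset.univ.erase a, α i a b)
    (hq_stat : ∀ b : K, ∑ a, q i a * α i a b = 0)
    (hq_pos : ∀ j a, 0 < q j a) (hp_pos : ∀ y, 0 < p y)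
    (hex : ∃ x b, 0 < α i (x i) b ∧ p (Function.update x i b) * (∏ j, q j (x j))
        ≠ p x * (∏ j, q j (Function.update x i b j))) :
    ∑ x, ∑ b, (α i b (x i) * p (Function.update x i b) - α i (x i) b * p x)
        * Real.log (p x / ∏ j, q j (x j)) < 0 := by
  obtain ⟨x₀, b₀, hα0, hne0⟩ := hex
  rw [mut_eq α q p i]
  calc ∑ x, ∑ b, α i (x i) b * (p x *
        (Real.log (p (Function.update x i b) / ∏ j, q j (Function.update x i b j))
          - Real.log (p x / ∏ j, q j (x j))))
      < ∑ x, ∑ b, α i (x i) b * (p (Function.update x i b) * (∏ j, q j (x j))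
        / (∏ j, q j (Function.update x i b j)) - p x) := by
        apply Finset.sum_lt_sum
        · intro x _
          exact Finset.sum_le_sum fun b _ => mut_pt_le α q p i x b hα_off hq_pos hp_pos
        · refine ⟨x₀, Finset.mem_univ _, ?_⟩
          apply Finset.sum_lt_sum
          · intro b _
            exact mut_pt_le α q p i x₀ b hα_off hq_pos hp_pos
          · exact ⟨b₀, Finset.mem_univ _, mut_pt_lt α q p i x₀ b₀ hq_pos hp_pos hα0 hne0⟩
    _ = 0 := mut_H_zero α q p i hα_diag hq_stat hq_pos
end M2

section R
set_option linter.unusedSectionVars false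
variable {K : Type*} [Fintype K] [DecidableEq K] {n : ℕ}

/-- `q_I(b) = ∏_{j ∈ I} q_j(b_j)`. -/
def qIprod (q : Fin n → K → ℝ) (I : Finset (Fin n)) (b : ↥I → K) : ℝ :=
  ∏ j : ↥I, q j.1 (b j)

/-- `ψ(b) = ln(μ_I(b)/q_I(b))`. -/
noncomputable def psiFn (q : Fin n → K → ℝ) (p : (Fin n → K) → ℝ) (I : Finset (Fin n)) (b : ↥I → K) : ℝ :=
  Real.log (marginal p I b) - Real.log (qIprod q I b)

lemma opp_sign_log {u v : ℝ} (hu : 0 < u) (hv : 0 < v) :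
    (u - v) * (Real.log v - Real.log u) ≤ 0 := by
  rcases le_total u v with h | h
  · apply mul_nonpos_of_nonpos_of_nonneg (by linarith)
    have := Real.log_le_log hu h
    linarith
  · apply mul_nonpos_of_nonneg_of_nonpos (by linarith)
    have := Real.log_le_log hv h
    linarith

lemma antisym_zero {A : Type*} [Fintype A] (g : A → A → ℝ) (hg : ∀ a b, g a b = - g b a) :
    ∑ a, ∑ b, g a b = 0 := by
  have h2 : ∑ a, ∑ b, (g a b + g b a) = 0 :=
    Finset.sum_eq_zero fun a _ => Finset.sum_eq_zero fun b _ => by rw [hg a b]; ring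
  have h3 : ∑ a, ∑ b, (g a b + g b a)
      = (∑ a, ∑ b, g a b) + (∑ a, ∑ b, g b a) := by
    rw [← Finset.sum_add_distrib]
    congr 1; funext a; rw [← Finset.sum_add_distrib]
  have h4 : (∑ a, ∑ b, g b a) = ∑ a, ∑ b, g a b := Finset.sum_comm
  rw [h3, h4] at h2
  linarith

variable (q : Fin n → K → ℝ) (p : (Fin n → K) → ℝ)
    (φ : (I : Finset (Fin n)) → (↥I → K) → (↥I → K) → ℝ)

lemma rec_step1 (I : Finset (Fin n)) :
    ∑ x, ∑ a : ↥I → K,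
      (φ I a (subword I x) * marginal p I (subword I x) * p (substGenome I x a)
        - φ I (subword I x) a * marginal p I a * p x) * Real.log (p x / ∏ j, q j (x j))
    = ∑ x, ∑ a : ↥I → K, φ I (subword I x) a * marginal p I a * p x
        * (Real.log (p (substGenome I x a) / ∏ j, q j (substGenome I x a j))
          - Real.log (p x / ∏ j, q j (x j))) := by
  have h := sum_invol I (fun x a =>
    φ I a (subword I x) * marginal p I (subword I x) * p (substGenome I x a)
      * Real.log (p x / ∏ j, q j (x j)))
  simp only [subword_substGenome, substGenome_substGenome, substGenome_subword] at h
  simp_rw [sub_mul, Finset.sum_sub_distrib]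
  rw [h, ← Finset.sum_sub_distrib]
  congr 1; funext x; rw [← Finset.sum_sub_distrib]; congr 1; funext a; ring

lemma rec_step2 (I : Finset (Fin n)) (hφ_symm : ∀ a b, φ I a b = φ I b a) :
    2 * ∑ x, ∑ a : ↥I → K, φ I (subword I x) a * marginal p I a * p x
        * (Real.log (p (substGenome I x a) / ∏ j, q j (substGenome I x a j))
          - Real.log (p x / ∏ j, q j (x j)))
    = ∑ x, ∑ a : ↥I → K, φ I (subword I x) a
        * (marginal p I a * p x - marginal p I (subword I x) * p (substGenome I x a))
        * (Real.log (p (substGenome I x a) / ∏ j, q j (substGenome I x a j))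
          - Real.log (p x / ∏ j, q j (x j))) := by
  have h := sum_invol I (fun x a =>
    φ I (subword I x) a * marginal p I a * p x
      * (Real.log (p (substGenome I x a) / ∏ j, q j (substGenome I x a j))
        - Real.log (p x / ∏ j, q j (x j))))
  simp only [subword_substGenome, substGenome_substGenome, substGenome_subword] at h
  rw [two_mul]
  nth_rewrite 1 [h]
  rw [← Finset.sum_add_distrib]
  congr 1; funext x; rw [← Finset.sum_add_distrib]; congr 1; funext a
  rw [hφ_symm a (subword I x)]
  ring

lemma rec_step3 (I : Finset (Fin n)) (hq_pos : ∀ j a, 0 < q j a)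
    (hp_pos : ∀ y, 0 < p y) (hX : Nonempty (Fin n → K)) (x : Fin n → K) (a : ↥I → K) :
    Real.log (p (substGenome I x a) / ∏ j, q j (substGenome I x a j))
      - Real.log (p x / ∏ j, q j (x j))
    = (Real.log (p (substGenome I x a) / marginal p I a)
        - Real.log (p x / marginal p I (subword I x)))
      + (psiFn q p I a - psiFn q p I (subword I x)) := by
  have hQpos : ∀ y : Fin n → K, 0 < ∏ j, q j (y j) :=
    fun y => Finset.prod_pos fun j _ => hq_pos j (y j)
  have hqIpos : ∀ b : ↥I → K, (0:ℝ) < ∏ j : ↥I, q j.1 (b j) :=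
    fun b => Finset.prod_pos fun j _ => hq_pos j.1 (b j)
  have hmpos : ∀ b : ↥I → K, 0 < marginal p I b := marginal_pos_s10 I p hp_pos hX
  have hkey := congrArg Real.log (prod_q_subst q I x a)
  rw [Real.log_mul (hQpos (substGenome I x a)).ne' (hqIpos (subword I x)).ne',
    Real.log_mul (hQpos x).ne' (hqIpos a).ne'] at hkey
  unfold psiFn
  rw [Real.log_div (hp_pos _).ne' (hQpos _).ne', Real.log_div (hp_pos _).ne' (hQpos _).ne',
    Real.log_div (hp_pos _).ne' (hmpos _).ne', Real.log_div (hp_pos _).ne' (hmpos _).ne']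
  unfold qIprod
  linarith [hkey]

lemma rec_A_pt (I : Finset (Fin n)) (hφ_nonneg : ∀ a b, 0 ≤ φ I a b)
    (hp_pos : ∀ y, 0 < p y) (hX : Nonempty (Fin n → K)) (x : Fin n → K) (a : ↥I → K) :
    φ I (subword I x) a
      * (marginal p I a * p x - marginal p I (subword I x) * p (substGenome I x a))
      * (Real.log (p (substGenome I x a) / marginal p I a)
        - Real.log (p x / marginal p I (subword I x))) ≤ 0 := by
  have hmpos : ∀ b : ↥I → K, 0 < marginal p I b := marginal_pos_s10 I p hp_pos hX
  set u := p x / marginal p I (subword I x) with hu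
  set v := p (substGenome I x a) / marginal p I a with hv
  have hupos : 0 < u := div_pos (hp_pos x) (hmpos _)
  have hvpos : 0 < v := div_pos (hp_pos _) (hmpos _)
  have hfac : marginal p I a * p x - marginal p I (subword I x) * p (substGenome I x a)
      = (marginal p I a * marginal p I (subword I x)) * (u - v) := by
    have h1 : marginal p I a ≠ 0 := (hmpos a).ne'
    have h2 : marginal p I (subword I x) ≠ 0 := (hmpos (subword I x)).ne'
    rw [hu, hv]
    field_simp
  rw [hfac]
  have key : φ I (subword I x) a * ((marginal p I a * marginal p I (subword I x))
      * ((u - v) * (Real.log v - Real.log u))) ≤ 0 :=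
    mul_nonpos_of_nonneg_of_nonpos (hφ_nonneg _ _)
      (mul_nonpos_of_nonneg_of_nonpos (mul_pos (hmpos _) (hmpos _)).le
        (opp_sign_log hupos hvpos))
  nlinarith [key]

lemma rec_B_zero (I : Finset (Fin n)) (hφ_symm : ∀ a b, φ I a b = φ I b a)
    (hp_pos : ∀ y, 0 < p y) (hX : Nonempty (Fin n → K)) :
    ∑ x, ∑ a : ↥I → K, φ I (subword I x) a
      * (marginal p I a * p x - marginal p I (subword I x) * p (substGenome I x a))
      * (psiFn q p I a - psiFn q p I (subword I x)) = 0 := by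
  have hsplit : ∀ (x : Fin n → K) (a : ↥I → K),
      φ I (subword I x) a
        * (marginal p I a * p x - marginal p I (subword I x) * p (substGenome I x a))
        * (psiFn q p I a - psiFn q p I (subword I x))
      = (φ I (subword I x) a * (psiFn q p I a - psiFn q p I (subword I x)) * marginal p I a)
          * p x
        - φ I (subword I x) a * (psiFn q p I a - psiFn q p I (subword I x))
          * marginal p I (subword I x) * p (substGenome I x a) := by
    intro x a; ring
  simp_rw [hsplit, Finset.sum_sub_distrib]
  have hS1 : ∑ x, ∑ a : ↥I → K,
      (φ I (subword I x) a * (psiFn q p I a - psiFn q p I (subword I x)) * marginal p I a)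
        * p x = 0 := by
    have hgrp : ∀ x : Fin n → K, ∑ a : ↥I → K,
        (φ I (subword I x) a * (psiFn q p I a - psiFn q p I (subword I x)) * marginal p I a)
          * p x
        = (∑ a : ↥I → K,
            φ I (subword I x) a * (psiFn q p I a - psiFn q p I (subword I x))
              * marginal p I a) * p x := fun x => (Finset.sum_mul _ _ _).symm
    simp_rw [hgrp]
    rw [sum_subword_mul I (fun b => ∑ a : ↥I → K,
      φ I b a * (psiFn q p I a - psiFn q p I b) * marginal p I a) p]
    simp_rw [Finset.sum_mul]
    apply antisym_zero
    intro b a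
    rw [hφ_symm b a]
    ring
  have hS2 : ∑ x, ∑ a : ↥I → K,
      φ I (subword I x) a * (psiFn q p I a - psiFn q p I (subword I x))
        * marginal p I (subword I x) * p (substGenome I x a) = 0 := by
    have h := sum_invol I (fun x a =>
      φ I (subword I x) a * (psiFn q p I a - psiFn q p I (subword I x))
        * marginal p I (subword I x) * p (substGenome I x a))
    simp only [subword_substGenome, substGenome_substGenome, substGenome_subword] at h
    rw [h]
    have hgrp : ∀ x : Fin n → K, ∑ a : ↥I → K,
        φ I a (subword I x) * (psiFn q p I (subword I x) - psiFn q p I a)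
          * marginal p I a * p x
        = (∑ a : ↥I → K, φ I a (subword I x) * (psiFn q p I (subword I x) - psiFn q p I a)
            * marginal p I a) * p x := fun x => (Finset.sum_mul _ _ _).symm
    simp_rw [hgrp]
    rw [sum_subword_mul I (fun b => ∑ a : ↥I → K,
      φ I a b * (psiFn q p I b - psiFn q p I a) * marginal p I a) p]
    simp_rw [Finset.sum_mul]
    apply antisym_zero
    intro b a
    rw [hφ_symm a b]
    ring
  rw [hS1, hS2, sub_zero]

lemma rec_nonpos (I : Finset (Fin n)) (hφ_symm : ∀ a b, φ I a b = φ I b a)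
    (hφ_nonneg : ∀ a b, 0 ≤ φ I a b) (hq_pos : ∀ j a, 0 < q j a)
    (hp_pos : ∀ y, 0 < p y) (hX : Nonempty (Fin n → K)) :
    ∑ x, ∑ a : ↥I → K,
      (φ I a (subword I x) * marginal p I (subword I x) * p (substGenome I x a)
        - φ I (subword I x) a * marginal p I a * p x)
        * Real.log (p x / ∏ j, q j (x j)) ≤ 0 := by
  rw [rec_step1]
  have h2 := rec_step2 q p φ I hφ_symm
  have h3 : ∑ x, ∑ a : ↥I → K, φ I (subword I x) a
        * (marginal p I a * p x - marginal p I (subword I x) * p (substGenome I x a))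
        * (Real.log (p (substGenome I x a) / ∏ j, q j (substGenome I x a j))
          - Real.log (p x / ∏ j, q j (x j)))
      = (∑ x, ∑ a : ↥I → K, φ I (subword I x) a
          * (marginal p I a * p x - marginal p I (subword I x) * p (substGenome I x a))
          * (Real.log (p (substGenome I x a) / marginal p I a)
            - Real.log (p x / marginal p I (subword I x))))
        + ∑ x, ∑ a : ↥I → K, φ I (subword I x) a
          * (marginal p I a * p x - marginal p I (subword I x) * p (substGenome I x a))
          * (psiFn q p I a - psiFn q p I (subword I x)) := by
    rw [← Finset.sum_add_distrib]
    apply Finset.sum_congr rfl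
    intro x _
    rw [← Finset.sum_add_distrib]
    apply Finset.sum_congr rfl
    intro a _
    rw [rec_step3 q p I hq_pos hp_pos hX x a]
    ring
  have hA : (∑ x, ∑ a : ↥I → K, φ I (subword I x) a
      * (marginal p I a * p x - marginal p I (subword I x) * p (substGenome I x a))
      * (Real.log (p (substGenome I x a) / marginal p I a)
        - Real.log (p x / marginal p I (subword I x)))) ≤ 0 :=
    Finset.sum_nonpos fun x _ => Finset.sum_nonpos fun a _ =>
      rec_A_pt p φ I hφ_nonneg hp_pos hX x a
  have hB := rec_B_zero q p φ I hφ_symm hp_pos hX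
  linarith [h2, h3]
end R

section C
set_option linter.unusedSectionVars false
variable {K : Type*} [Fintype K] [DecidableEq K] {n : ℕ}

lemma flat_implies_eq (α : Fin n → K → K → ℝ) (q : Fin n → K → ℝ) (p : (Fin n → K) → ℝ)
    (hα_conn : ∀ i : Fin n, ∀ a b : K,
      Relation.ReflTransGen (fun u v => 0 < α i u v) a b)
    (hq_pos : ∀ i a, 0 < q i a) (hq_sum : ∀ i, ∑ a, q i a = 1)
    (hp_pos : ∀ x, 0 < p x) (hp_sum : ∑ x, p x = 1)
    (hX : Nonempty (Fin n → K))
    (hflat : ∀ (i : Fin n) (x : Fin n → K) (b : K), 0 < α i (x i) b →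
      p (Function.update x i b) * (∏ j, q j (x j))
        = p x * (∏ j, q j (Function.update x i b j))) :
    p = fun x => ∏ j, q j (x j) := by
  have hQpos : ∀ y : Fin n → K, 0 < ∏ j, q j (y j) :=
    fun y => Finset.prod_pos fun j _ => hq_pos j (y j)
  have hedge : ∀ (i : Fin n) (x : Fin n → K) (b : K), 0 < α i (x i) b →
      p (Function.update x i b) / (∏ j, q j (Function.update x i b j))
        = p x / (∏ j, q j (x j)) := by
    intro i x b h
    rw [div_eq_div_iff (hQpos _).ne' (hQpos _).ne']
    exact hflat i x b h
  have hchain : ∀ (i : Fin n) (x : Fin n → K) (u v : K),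
      Relation.ReflTransGen (fun u v => 0 < α i u v) u v →
      p (Function.update x i u) / (∏ j, q j (Function.update x i u j))
        = p (Function.update x i v) / (∏ j, q j (Function.update x i v j)) := by
    intro i x u v h
    induction h with
    | refl => rfl
    | @tail c d _ hlast ih =>
      have h2 := hedge i (Function.update x i c) d (by rwa [Function.update_self])
      rw [Function.update_idem] at h2
      rw [ih, ← h2]
  have hconst : ∀ x y : Fin n → K,
      p x / (∏ j, q j (x j)) = p y / (∏ j, q j (y j)) := by
    have key : ∀ s : Finset (Fin n), ∀ x y : Fin n → K, (∀ j, j ∉ s → x j = y j) →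
        p x / (∏ j, q j (x j)) = p y / (∏ j, q j (y j)) := by
      intro s
      induction s using Finset.induction_on with
      | empty =>
        intro x y h
        have : x = y := funext fun j => h j (Finset.notMem_empty j)
        rw [this]
      | @insert i s hi ih =>
        intro x y hxy
        have h1 : p x / (∏ j, q j (x j))
            = p (Function.update x i (y i)) / (∏ j, q j (Function.update x i (y i) j)) := by
          have h0 := hchain i x (x i) (y i) (hα_conn i (x i) (y i))
          rwa [Function.update_eq_self] at h0
        rw [h1]
        apply ih
        intro j hj
        by_cases hji : j = i
        · subst hji; rw [Function.update_self]
        · rw [Function.update_of_ne hji]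
          exact hxy j (by simp [hji, hj])
    intro x y
    exact key Finset.univ x y (fun j hj => absurd (Finset.mem_univ j) hj)
  obtain ⟨x₀⟩ := hX
  have hsumQ : ∑ x : Fin n → K, ∏ j, q j (x j) = 1 := by
    rw [← Fintype.prod_sum (fun i (a : K) => q i a)]
    simp [hq_sum]
  have hc : p x₀ / (∏ j, q j (x₀ j)) = 1 := by
    have h1 : ∑ x : Fin n → K, p x
        = ∑ x : Fin n → K, (p x₀ / (∏ j, q j (x₀ j))) * ∏ j, q j (x j) := by
      apply Finset.sum_congr rfl
      intro x _
      rw [← hconst x x₀, div_mul_cancel₀ _ (hQpos x).ne']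
    rw [hp_sum, ← Finset.mul_sum, hsumQ, mul_one] at h1
    linarith
  funext x
  have h2 : p x / (∏ j, q j (x j)) = 1 := by rw [hconst x x₀]; exact hc
  have h3 := (div_eq_one_iff_eq (hQpos x).ne').mp h2
  exact h3
end C

/-- along a strictly positive differentiable solution of the
mutation–recombination equation, the relative entropy `D(μ(t)|q_Λ)` with respect to the
product distribution `q_Λ(x) = ∏_i q_i(x_i)` has strictly negative time derivative at
every time `t` with `μ(t) ≠ q_Λ`. -/
theorem relative_entropy_strictly_decreases
    {K : Type*} [Fintype K] [DecidableEq K] {n : ℕ}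
    (α : Fin n → K → K → ℝ)
    (hα_off : ∀ i : Fin n, ∀ a b : K, a ≠ b → 0 ≤ α i a b)
    (hα_diag : ∀ i : Fin n, ∀ a : K, α i a a = -∑ b ∈ Finset.univ.erase a, α i a b)
    (hα_conn : ∀ i : Fin n, ∀ a b : K,
      Relation.ReflTransGen (fun u v => 0 < α i u v) a b)
    (q : Fin n → K → ℝ)
    (hq_pos : ∀ i a, 0 < q i a)
    (hq_sum : ∀ i, ∑ a, q i a = 1)
    (hq_stat : ∀ i : Fin n, ∀ b : K, ∑ a, q i a * α i a b = 0)
    (κ : ℝ) (hκ : 0 ≤ κ)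
    (φ : (I : Finset (Fin n)) → (↥I → K) → (↥I → K) → ℝ)
    (hφ_symm : ∀ I a b, φ I a b = φ I b a)
    (hφ_nonneg : ∀ I a b, 0 ≤ φ I a b)
    (μ : ℝ → (Fin n → K) → ℝ)
    (hμ_pos : ∀ t x, 0 < μ t x)
    (hμ_sum : ∀ t, ∑ x, μ t x = 1)
    (hμ_ode : ∀ t x, HasDerivAt (fun s => μ s x) (mutRecRHS α κ φ (μ t) x) t)
    (t : ℝ)
    (hne : μ t ≠ fun z => ∏ i, q i (z i)) :
    deriv (fun s => ∑ x, μ s x * Real.log (μ s x / ∏ i, q i (x i))) t < 0 := by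
  have hX : Nonempty (Fin n → K) := by
    by_contra h
    rw [not_nonempty_iff] at h
    have h1 := hμ_sum t
    rw [Finset.univ_eq_empty, Finset.sum_empty] at h1
    exact zero_ne_one h1
  have hQpos : ∀ y : Fin n → K, 0 < ∏ j, q j (y j) :=
    fun y => Finset.prod_pos fun j _ => hq_pos j (y j)
  -- Step 1: compute the derivative
  have hD : HasDerivAt (fun s => ∑ x, μ s x * Real.log (μ s x / ∏ i, q i (x i)))
      (∑ x, mutRecRHS α κ φ (μ t) x
        * (Real.log (μ t x / ∏ i, q i (x i)) + 1)) t := by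
    apply HasDerivAt.fun_sum
    intro x _
    have h1 := hμ_ode t x
    have h2 : HasDerivAt (fun s => Real.log (μ s x))
        (mutRecRHS α κ φ (μ t) x / μ t x) t := h1.log (hμ_pos t x).ne'
    have h3 : HasDerivAt
        (fun s => μ s x * (Real.log (μ s x) - Real.log (∏ i, q i (x i))))
        (mutRecRHS α κ φ (μ t) x * (Real.log (μ t x) - Real.log (∏ i, q i (x i)))
          + μ t x * (mutRecRHS α κ φ (μ t) x / μ t x)) t :=
      h1.mul (h2.sub_const _)
    have heq : (fun s => μ s x * Real.log (μ s x / ∏ i, q i (x i)))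
        = fun s => μ s x * (Real.log (μ s x) - Real.log (∏ i, q i (x i))) := by
      funext s
      rw [Real.log_div (hμ_pos s x).ne' (hQpos x).ne']
    rw [heq]
    refine h3.congr_deriv ?_
    rw [Real.log_div (hμ_pos t x).ne' (hQpos x).ne',
      mul_div_cancel₀ _ (hμ_pos t x).ne']
    ring
  rw [hD.deriv]
  -- Step 2: drop the `+1` using mass conservation
  have hmass := sum_mutRecRHS α κ φ (μ t)
  have hdrop : ∑ x, mutRecRHS α κ φ (μ t) x * (Real.log (μ t x / ∏ i, q i (x i)) + 1)
      = ∑ x, mutRecRHS α κ φ (μ t) x * Real.log (μ t x / ∏ i, q i (x i)) := by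
    simp_rw [mul_add, mul_one, Finset.sum_add_distrib, hmass, add_zero]
  rw [hdrop]
  -- Step 3: split into mutation and recombination parts
  have hsplit : ∑ x, mutRecRHS α κ φ (μ t) x * Real.log (μ t x / ∏ i, q i (x i))
      = (∑ i : Fin n, ∑ x, ∑ b,
          (α i b (x i) * μ t (Function.update x i b) - α i (x i) b * μ t x)
            * Real.log (μ t x / ∏ j, q j (x j)))
        + κ * ∑ I : Finset (Fin n), ∑ x, ∑ a : ↥I → K,
          (φ I a (subword I x) * marginal (μ t) I (subword I x) * μ t (substGenome I x a)
            - φ I (subword I x) a * marginal (μ t) I a * μ t x)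
            * Real.log (μ t x / ∏ j, q j (x j)) := by
    unfold mutRecRHS
    simp_rw [add_mul, Finset.sum_add_distrib]
    congr 1
    · simp_rw [Finset.sum_mul]
      rw [Finset.sum_comm]
    · simp_rw [mul_assoc, ← Finset.mul_sum]
      congr 1
      simp_rw [Finset.sum_mul]
      rw [Finset.sum_comm]
  rw [hsplit]
  -- Step 4: recombination part is ≤ 0
  have hRec : ∑ I : Finset (Fin n), ∑ x, ∑ a : ↥I → K,
      (φ I a (subword I x) * marginal (μ t) I (subword I x) * μ t (substGenome I x a)
        - φ I (subword I x) a * marginal (μ t) I a * μ t x)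
        * Real.log (μ t x / ∏ j, q j (x j)) ≤ 0 :=
    Finset.sum_nonpos fun I _ =>
      rec_nonpos q (μ t) φ I (hφ_symm I) (hφ_nonneg I) hq_pos (hμ_pos t) hX
  -- Step 5: mutation part is < 0
  have hex : ∃ i : Fin n, ∃ x : Fin n → K, ∃ b : K, 0 < α i (x i) b ∧
      μ t (Function.update x i b) * (∏ j, q j (x j))
        ≠ μ t x * (∏ j, q j (Function.update x i b j)) := by
    by_contra h
    push_neg at h
    exact hne (flat_implies_eq α q (μ t) hα_conn hq_pos hq_sum (hμ_pos t) (hμ_sum t) hX h)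
  obtain ⟨i₀, x₀, b₀, hα0, hne0⟩ := hex
  have hMut : (∑ i : Fin n, ∑ x, ∑ b,
      (α i b (x i) * μ t (Function.update x i b) - α i (x i) b * μ t x)
        * Real.log (μ t x / ∏ j, q j (x j))) < 0 := by
    have hlt : (∑ i : Fin n, ∑ x, ∑ b,
        (α i b (x i) * μ t (Function.update x i b) - α i (x i) b * μ t x)
          * Real.log (μ t x / ∏ j, q j (x j))) < ∑ _i : Fin n, (0:ℝ) := by
      apply Finset.sum_lt_sum
      · intro i _
        exact mut_nonpos α q (μ t) i (hα_off i) (hα_diag i) (hq_stat i) hq_pos (hμ_pos t)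
      · exact ⟨i₀, Finset.mem_univ _,
          mut_neg α q (μ t) i₀ (hα_off i₀) (hα_diag i₀) (hq_stat i₀) hq_pos (hμ_pos t)
            ⟨x₀, b₀, hα0, hne0⟩⟩
    simpa using hlt
  have hκR : κ * ∑ I : Finset (Fin n), ∑ x, ∑ a : ↥I → K,
      (φ I a (subword I x) * marginal (μ t) I (subword I x) * μ t (substGenome I x a)
        - φ I (subword I x) a * marginal (μ t) I a * μ t x)
        * Real.log (μ t x / ∏ j, q j (x j)) ≤ 0 :=
    mul_nonpos_of_nonneg_of_nonpos hκ hRec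
  linarith
end
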